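/- arXiv:1906.12235 — 3 statements merged into one kernel-verified Lean document; each statement's English description precedes it below -/
import Mathlib

section
/- Let G be a bipartite false twin-free graph without isolated vertices with bipartition A ∪ B such that γ_t(G) = 6 and γ_gr^t(G) = 6. Then for any two distinct vertices a_1, a_2 ∈ A, |N(a_1) ∪ N(a_2)| = |B| − 1, and for any two distinct vertices b_1, b_2 ∈ B, |N(b_1) ∪ N(b_2)| = |A| − 1. -/
/-- `S` is a total dominating set of `G`: every vertex has a neighbor in `S`. -/
def IsTotalDomSet {V : Type*} (G : SimpleGraph V) (S : Set V) : Prop :=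
  ∀ v : V, ∃ u ∈ S, G.Adj v u

/-- `l` is a legal sequence of `G`: the vertices are distinct and every vertex
(except possibly the first) totally dominates a vertex not totally dominated
by the previous vertices. -/
def IsLegalSeq {V : Type*} (G : SimpleGraph V) (l : List V) : Prop :=
  l.Nodup ∧ ∀ i : Fin l.length, 0 < (i : ℕ) →
    ∃ w : V, G.Adj (l.get i) w ∧ ∀ j : Fin l.length, (j : ℕ) < (i : ℕ) → ¬ G.Adj (l.get j) w

/-- `l` is a total dominating sequence of `G`. -/
def IsTotalDomSeq {V : Type*} (G : SimpleGraph V) (l : List V) : Prop :=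
  IsLegalSeq G l ∧ IsTotalDomSet G {v | v ∈ l}

/-- The Grundy total domination number of `G`: the maximum length of a total
dominating sequence. -/
noncomputable def grundyTotalDomNum {V : Type*} (G : SimpleGraph V) : ℕ :=
  sSup {k : ℕ | ∃ l : List V, IsTotalDomSeq G l ∧ l.length = k}

/-- The total domination number of `G`: the minimum cardinality of a total
dominating set. -/
noncomputable def totalDomNum {V : Type*} (G : SimpleGraph V) : ℕ :=
  sInf {k : ℕ | ∃ S : Set V, IsTotalDomSet G S ∧ S.ncard = k}

/-- `A`, `B` is a bipartition of `G`. -/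
def IsBipartitionOf {V : Type*} (G : SimpleGraph V) (A B : Set V) : Prop :=
  (∀ v : V, (v ∈ A ∧ v ∉ B) ∨ (v ∈ B ∧ v ∉ A)) ∧
  ∀ ⦃u v : V⦄, G.Adj u v → (u ∈ A ∧ v ∈ B) ∨ (u ∈ B ∧ v ∈ A)

/-- `G` has no false twins: distinct vertices have distinct open neighborhoods. -/
def FalseTwinFree {V : Type*} (G : SimpleGraph V) : Prop :=
  ∀ u v : V, u ≠ v → G.neighborSet u ≠ G.neighborSet v

/-- `G` has no isolated vertices. -/
def NoIsolatedVerts {V : Type*} (G : SimpleGraph V) : Prop :=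
  ∀ v : V, ∃ u : V, G.Adj v u

namespace TDAux

variable {V : Type*} {G : SimpleGraph V}

lemma legal_nil : IsLegalSeq G ([] : List V) :=
  ⟨List.nodup_nil, fun i _ => absurd i.isLt (by simp)⟩

lemma legal_snoc {l : List V} (h : IsLegalSeq G l) {v : V} (hv : v ∉ l)
    (hw : 0 < l.length → ∃ w, G.Adj v w ∧ ∀ u ∈ l, ¬ G.Adj u w) :
    IsLegalSeq G (l ++ [v]) := by
  obtain ⟨hnd, hleg⟩ := h
  refine ⟨by simp [List.nodup_append, hnd, hv]; intro a ha h; exact hv (h ▸ ha), ?_⟩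
  intro i hi
  have hil : (i : ℕ) < l.length + 1 := by simpa using i.isLt
  rcases lt_or_eq_of_le (Nat.lt_succ_iff.mp hil) with hlt | heq
  · have hget : (l ++ [v]).get i = l.get ⟨i, hlt⟩ := by
      simp [List.get_eq_getElem, List.getElem_append_left hlt]
    obtain ⟨w, hw1, hw2⟩ := hleg ⟨i, hlt⟩ hi
    refine ⟨w, by rw [hget]; exact hw1, ?_⟩
    intro j hj
    have hjlt : (j : ℕ) < l.length := lt_trans hj hlt
    have hg2 : (l ++ [v]).get j = l.get ⟨j, hjlt⟩ := by
      simp [List.get_eq_getElem, List.getElem_append_left hjlt]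
    rw [hg2]
    exact hw2 ⟨j, hjlt⟩ hj
  · have hget : (l ++ [v]).get i = v := by
      simp [List.get_eq_getElem, ← heq, List.getElem_concat_length]
    obtain ⟨w, hw1, hw2⟩ := hw (heq ▸ hi)
    refine ⟨w, by rw [hget]; exact hw1, ?_⟩
    intro j hj
    have hjlt : (j : ℕ) < l.length := by omega
    have hg2 : (l ++ [v]).get j = l.get ⟨j, hjlt⟩ := by
      simp [List.get_eq_getElem, List.getElem_append_left hjlt]
    rw [hg2]
    exact hw2 _ (by simp [List.get_eq_getElem])

end TDAux

namespace TDAux2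

variable {V : Type*} {G : SimpleGraph V}

lemma legal_singleton (v : V) : IsLegalSeq G [v] := by
  have := TDAux.legal_snoc (G := G) TDAux.legal_nil (v := v) (by simp) (by simp)
  simpa using this

lemma legal_prefix {l₁ l₂ : List V} (h : IsLegalSeq G (l₁ ++ l₂)) : IsLegalSeq G l₁ := by
  obtain ⟨hnd, hleg⟩ := h
  refine ⟨(List.nodup_append.mp hnd).1, ?_⟩
  intro i hi
  have hil : (i : ℕ) < (l₁ ++ l₂).length := by
    simp only [List.length_append]; omega
  obtain ⟨w, hw1, hw2⟩ := hleg ⟨i, hil⟩ hi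
  have hg : (l₁ ++ l₂).get ⟨i, hil⟩ = l₁.get i := by
    simp [List.get_eq_getElem, List.getElem_append_left i.isLt]
  refine ⟨w, hg ▸ hw1, ?_⟩
  intro j hj
  have hjl : (j : ℕ) < (l₁ ++ l₂).length := by
    simp only [List.length_append]; omega
  have hg2 : (l₁ ++ l₂).get ⟨j, hjl⟩ = l₁.get j := by
    simp [List.get_eq_getElem, List.getElem_append_left j.isLt]
  exact hg2 ▸ hw2 ⟨j, hjl⟩ hj

lemma mem_right_of_adj {A B : Set V} (hbip : IsBipartitionOf G A B) {a v : V}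
    (ha : a ∈ A) (hadj : G.Adj a v) : v ∈ B := by
  rcases hbip.2 hadj with ⟨_, hv⟩ | ⟨haB, _⟩
  · exact hv
  · rcases hbip.1 a with ⟨_, h⟩ | ⟨_, h⟩
    · exact absurd haB h
    · exact absurd ha h

lemma bip_symm {A B : Set V} (hbip : IsBipartitionOf G A B) : IsBipartitionOf G B A :=
  ⟨fun v => (hbip.1 v).symm, fun u v h => (hbip.2 h).symm⟩

lemma not_adj_same_side {A B : Set V} (hbip : IsBipartitionOf G A B) {u v : V}
    (hu : u ∈ A) (hv : v ∈ A) : ¬ G.Adj u v := fun h =>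
  (hbip.1 v).elim (fun hh => hh.2 (mem_right_of_adj hbip hu h))
    (fun hh => hh.2 hv)

/-- appending a legal `B`-side sequence after a legal `A`-side sequence is legal -/
lemma legal_append {A B : Set V} (hbip : IsBipartitionOf G A B) (hiso : NoIsolatedVerts G)
    {l₁ l₂ : List V} (h₁ : IsLegalSeq G l₁) (h₂ : IsLegalSeq G l₂)
    (hA : ∀ v ∈ l₁, v ∈ A) (hB : ∀ v ∈ l₂, v ∈ B) : IsLegalSeq G (l₁ ++ l₂) := by
  induction l₂ using List.reverseRecOn with
  | nil => simpa using h₁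
  | append_singleton l₂' v ih =>
    have hB' : ∀ u ∈ l₂', u ∈ B := fun u hu => hB u (by simp [hu])
    have hvB : v ∈ B := hB v (by simp)
    have h₂' : IsLegalSeq G l₂' := legal_prefix h₂
    have key : IsLegalSeq G (l₁ ++ l₂') := ih h₂' hB'
    rw [← List.append_assoc]
    refine TDAux.legal_snoc key ?_ ?_
    · intro hvmem
      rcases List.mem_append.mp hvmem with hm | hm
      · exact (hbip.1 v).elim (fun hh => hh.2 hvB) (fun hh => hh.2 (hA v hm))
      · exact (List.nodup_append.mp h₂.1).2.2 v hm v (by simp) rfl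
    · intro _
      -- find a witness for v : if l₂' is empty, any neighbor of v works,
      -- otherwise use the witness from h₂
      have hWit : ∃ w, G.Adj v w ∧ ∀ u ∈ l₂', ¬ G.Adj u w := by
        rcases Nat.eq_zero_or_pos l₂'.length with h0 | hpos
        · obtain ⟨w, hw⟩ := hiso v
          exact ⟨w, hw, fun u hu => absurd (List.length_pos_of_mem hu) (by omega)⟩
        · have hil : l₂'.length < (l₂' ++ [v]).length := by simp
          obtain ⟨w, hw1, hw2⟩ := h₂.2 ⟨l₂'.length, hil⟩ hpos
          have hg : (l₂' ++ [v]).get ⟨l₂'.length, hil⟩ = v := by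
            simp [List.get_eq_getElem, List.getElem_concat_length]
          refine ⟨w, hg ▸ hw1, ?_⟩
          intro u hu
          obtain ⟨k, hgk⟩ := List.get_of_mem hu
          have hkl : (k : ℕ) < (l₂' ++ [v]).length := by
            simp only [List.length_append]; omega
          have hg2 : (l₂' ++ [v]).get ⟨k, hkl⟩ = u := by
            rw [← hgk]
            simp [List.get_eq_getElem, List.getElem_append_left k.isLt]
          exact hg2 ▸ hw2 ⟨k, hkl⟩ k.isLt
      obtain ⟨w, hw1, hw2⟩ := hWit
      have hwA : w ∈ A := by
        have := mem_right_of_adj (bip_symm hbip) hvB hw1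
        exact this
      refine ⟨w, hw1, ?_⟩
      intro u hu
      rcases List.mem_append.mp hu with hm | hm
      · exact not_adj_same_side hbip (hA u hm) hwA
      · exact hw2 u hm

end TDAux2

namespace TDAux3

variable {V : Type*} {G : SimpleGraph V}

lemma extend_step (hiso : NoIsolatedVerts G) {l : List V} (h : IsLegalSeq G l)
    (hnd : ¬ IsTotalDomSet G {v | v ∈ l}) : ∃ u, u ∉ l ∧ IsLegalSeq G (l ++ [u]) := by
  unfold IsTotalDomSet at hnd
  push_neg at hnd
  obtain ⟨x, hx⟩ := hnd
  obtain ⟨u, hu⟩ := hiso x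
  have humem : u ∉ l := fun hm => hx u hm hu
  refine ⟨u, humem, TDAux.legal_snoc h humem (fun _ => ⟨x, hu.symm, ?_⟩)⟩
  intro t ht hadj
  exact hx t ht hadj.symm

lemma legal_to_tds [Fintype V] (hiso : NoIsolatedVerts G) {l : List V}
    (h : IsLegalSeq G l) : ∃ l', IsTotalDomSeq G l' ∧ l.length ≤ l'.length := by
  by_cases htd : IsTotalDomSet G {v | v ∈ l}
  · exact ⟨l, ⟨h, htd⟩, le_rfl⟩
  · obtain ⟨u, _, h'⟩ := extend_step hiso h htd
    have hlen : Fintype.card V - (l ++ [u]).length < Fintype.card V - l.length := by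
      have := h'.1.length_le_card
      simp only [List.length_append, List.length_singleton] at this ⊢
      omega
    obtain ⟨l', hl', hle⟩ := legal_to_tds hiso h'
    exact ⟨l', hl', le_trans (by simp) hle⟩
termination_by Fintype.card V - l.length

lemma length_le_grundy [Fintype V] (hiso : NoIsolatedVerts G) {l : List V}
    (h : IsLegalSeq G l) : l.length ≤ grundyTotalDomNum G := by
  obtain ⟨l', hl', hle⟩ := legal_to_tds hiso h
  refine le_trans hle (le_csSup ⟨Fintype.card V, ?_⟩ ⟨l', hl', rfl⟩)
  rintro k ⟨m, hm, rfl⟩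
  exact hm.1.1.length_le_card

lemma domnum_le {S : Set V} (h : IsTotalDomSet G S) : totalDomNum G ≤ S.ncard :=
  Nat.sInf_le ⟨S, h, rfl⟩

end TDAux3

namespace TDMain

open TDAux TDAux2 TDAux3

variable {V : Type*} {G : SimpleGraph V} {A B : Set V}

lemma legal_two {x y w : V} (hxy : x ≠ y) (h1 : G.Adj y w) (h2 : ¬ G.Adj x w) :
    IsLegalSeq G [x, y] := by
  have := TDAux.legal_snoc (G := G) (legal_singleton x) (v := y)
    (by simp [Ne.symm hxy]) (fun _ => ⟨w, h1, by
      intro u hu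
      simp only [List.mem_singleton] at hu
      subst hu; exact h2⟩)
  simpa using this

lemma legal_three {x y z w₁ w₂ : V} (hxy : x ≠ y) (hxz : x ≠ z) (hyz : y ≠ z)
    (h1 : G.Adj y w₁) (h2 : ¬ G.Adj x w₁)
    (h3 : G.Adj z w₂) (h4 : ¬ G.Adj x w₂) (h5 : ¬ G.Adj y w₂) :
    IsLegalSeq G [x, y, z] := by
  have := TDAux.legal_snoc (G := G) (legal_two hxy h1 h2) (v := z)
    (by simp [Ne.symm hxz, Ne.symm hyz]) (fun _ => ⟨w₂, h3, by
      intro u hu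
      simp only [List.mem_cons, List.mem_singleton, List.not_mem_nil, or_false] at hu
      rcases hu with rfl | rfl
      · exact h4
      · exact h5⟩)
  simpa using this

lemma legal_four {x y z t w₁ w₂ w₃ : V} (hxy : x ≠ y) (hxz : x ≠ z) (hyz : y ≠ z)
    (hxt : x ≠ t) (hyt : y ≠ t) (hzt : z ≠ t)
    (h1 : G.Adj y w₁) (h2 : ¬ G.Adj x w₁)
    (h3 : G.Adj z w₂) (h4 : ¬ G.Adj x w₂) (h5 : ¬ G.Adj y w₂)
    (h6 : G.Adj t w₃) (h7 : ¬ G.Adj x w₃) (h8 : ¬ G.Adj y w₃) (h9 : ¬ G.Adj z w₃) :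
    IsLegalSeq G [x, y, z, t] := by
  have := TDAux.legal_snoc (G := G) (legal_three hxy hxz hyz h1 h2 h3 h4 h5) (v := t)
    (by simp [Ne.symm hxt, Ne.symm hyt, Ne.symm hzt]) (fun _ => ⟨w₃, h6, by
      intro u hu
      simp only [List.mem_cons, List.mem_singleton, List.not_mem_nil, or_false] at hu
      rcases hu with rfl | rfl | rfl
      · exact h7
      · exact h8
      · exact h9⟩)
  simpa using this

/-- for two distinct vertices, some ordering of them is a legal sequence -/
lemma legal_pair_of_ne (hftf : FalseTwinFree G) {u v : V} (h : u ≠ v) :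
    ∃ c₁ c₂, ((c₁ = u ∧ c₂ = v) ∨ (c₁ = v ∧ c₂ = u)) ∧ IsLegalSeq G [c₁, c₂] := by
  by_cases hw : ∃ w, G.Adj v w ∧ ¬ G.Adj u w
  · obtain ⟨w, h1, h2⟩ := hw
    exact ⟨u, v, Or.inl ⟨rfl, rfl⟩, legal_two h h1 h2⟩
  · push_neg at hw
    have hsub : G.neighborSet v ⊆ G.neighborSet u := fun w hwv => hw w hwv
    have : ∃ w, G.Adj u w ∧ ¬ G.Adj v w := by
      by_contra hc
      push_neg at hc
      exact hftf u v h (le_antisymm (fun w hwu => hc w hwu) hsub)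
    obtain ⟨w, h1, h2⟩ := this
    exact ⟨v, u, Or.inr ⟨rfl, rfl⟩, legal_two h.symm h1 h2⟩

lemma chain_step (hbip : IsBipartitionOf G A B) {l : List V} (hl : IsLegalSeq G l)
    (hlB : ∀ v ∈ l, v ∈ B) {a z : V} (ha : a ∈ A)
    (hmiss : ∀ u ∈ l, ¬ G.Adj u a) (hz : G.Adj a z) :
    IsLegalSeq G (l ++ [z]) ∧ ∀ v ∈ l ++ [z], v ∈ B := by
  have hzB : z ∈ B := mem_right_of_adj hbip ha hz
  have hznl : z ∉ l := fun hm => hmiss z hm hz.symm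
  refine ⟨TDAux.legal_snoc hl hznl (fun _ => ⟨a, hz.symm, hmiss⟩), ?_⟩
  intro v hv
  rcases List.mem_append.mp hv with hm | hm
  · exact hlB v hm
  · simp only [List.mem_singleton] at hm; subst hm; exact hzB

lemma exists_missed [Fintype V] (hbip : IsBipartitionOf G A B)
    (hdom : ∀ S : Set V, IsTotalDomSet G S → 6 ≤ S.ncard)
    {SA : Set V} (hSA : SA ⊆ A) (hcov : ∀ b ∈ B, ∃ a ∈ SA, G.Adj b a)
    {L : List V} (hLB : ∀ v ∈ L, v ∈ B) (hlen : SA.ncard + L.length ≤ 5) :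
    ∃ a ∈ A, ∀ u ∈ L, ¬ G.Adj u a := by
  classical
  by_contra hc
  push_neg at hc
  set S : Set V := SA ∪ {v | v ∈ L} with hS
  have htds : IsTotalDomSet G S := by
    intro v
    rcases hbip.1 v with ⟨hA, _⟩ | ⟨hB, _⟩
    · obtain ⟨u, hu, hadj⟩ := hc v hA
      exact ⟨u, Or.inr hu, hadj.symm⟩
    · obtain ⟨a, haSA, hadj⟩ := hcov v hB
      exact ⟨a, Or.inl haSA, hadj⟩
  have hcard : S.ncard ≤ 5 := by
    have h1 : S.ncard ≤ SA.ncard + ({v | v ∈ L} : Set V).ncard := Set.ncard_union_le _ _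
    have h2 : ({v | v ∈ L} : Set V) = ↑L.toFinset := by
      ext v; simp
    have h3 : ({v | v ∈ L} : Set V).ncard ≤ L.length := by
      rw [h2, Set.ncard_coe_finset]
      exact L.toFinset_card_le
    omega
  have := hdom S htds
  omega

end TDMain

namespace TDCore

open TDAux TDAux2 TDAux3 TDMain

variable {V : Type*} {G : SimpleGraph V} {A B : Set V}

/-- for distinct vertices, some ordering has a witness for the second -/
lemma ordered_pair (hftf : FalseTwinFree G) {u v : V} (h : u ≠ v) :
    ∃ c₁ c₂ w, ((c₁ = u ∧ c₂ = v) ∨ (c₁ = v ∧ c₂ = u)) ∧ G.Adj c₂ w ∧ ¬ G.Adj c₁ w := by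
  by_cases hw : ∃ w, G.Adj v w ∧ ¬ G.Adj u w
  · obtain ⟨w, h1, h2⟩ := hw
    exact ⟨u, v, w, Or.inl ⟨rfl, rfl⟩, h1, h2⟩
  · push_neg at hw
    have : ∃ w, G.Adj u w ∧ ¬ G.Adj v w := by
      by_contra hc
      push_neg at hc
      exact hftf u v h (Set.Subset.antisymm (fun w hwu => hc w hwu) (fun w hwv => hw w hwv))
    obtain ⟨w, h1, h2⟩ := this
    exact ⟨v, u, w, Or.inr ⟨rfl, rfl⟩, h1, h2⟩

lemma P2_subset [Fintype V] (hbip : IsBipartitionOf G A B) (hftf : FalseTwinFree G)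
    (hiso : NoIsolatedVerts G) (hleg6 : ∀ l : List V, IsLegalSeq G l → l.length ≤ 6)
    {a₁ a₂ a : V} (h1 : a₁ ∈ A) (h2 : a₂ ∈ A) (ha : a ∈ A)
    (hne1 : a ≠ a₁) (hne2 : a ≠ a₂) (hne12 : a₁ ≠ a₂)
    (hfour : ∃ L : List V, IsLegalSeq G L ∧ (∀ v ∈ L, v ∈ B) ∧ L.length = 4)
    {b : V} (hb2 : G.Adj a₂ b) (hb1 : ¬ G.Adj a₁ b) : G.Adj a b := by
  by_contra hab
  obtain ⟨L, hL, hLB, hLlen⟩ := hfour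
  have append7 : ∀ T : List V, IsLegalSeq G T → (∀ v ∈ T, v ∈ A) → T.length = 3 → False := by
    intro T hT hTA hTlen
    have hlegal := legal_append hbip hiso hT hL hTA hLB
    have hlen := hleg6 _ hlegal
    rw [List.length_append, hTlen, hLlen] at hlen
    omega
  by_cases hw : ∃ w, G.Adj a w ∧ ¬ G.Adj a₁ w
  · obtain ⟨w, hw1, hw2⟩ := hw
    refine append7 [a₁, a, a₂]
      (legal_three (Ne.symm hne1) hne12 hne2 hw1 hw2 hb2 hb1 hab) ?_ rfl
    intro v hv
    simp only [List.mem_cons, List.mem_singleton, List.not_mem_nil, or_false] at hv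
    rcases hv with rfl | rfl | rfl <;> assumption
  · push_neg at hw
    by_cases hw' : ∃ w, G.Adj a₁ w ∧ ¬ G.Adj a w
    · obtain ⟨w, hw1, hw2⟩ := hw'
      refine append7 [a, a₁, a₂]
        (legal_three hne1 hne2 hne12 hw1 hw2 hb2 hab hb1) ?_ rfl
      intro v hv
      simp only [List.mem_cons, List.mem_singleton, List.not_mem_nil, or_false] at hv
      rcases hv with rfl | rfl | rfl <;> assumption
    · push_neg at hw'
      exact hftf a a₁ hne1
        (Set.Subset.antisymm (fun w hwa => hw w hwa) (fun w hwa => hw' w hwa))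

lemma no_cover_single [Fintype V] (hbip : IsBipartitionOf G A B) (hftf : FalseTwinFree G)
    (hiso : NoIsolatedVerts G) (hdom : ∀ S : Set V, IsTotalDomSet G S → 6 ≤ S.ncard)
    (hleg6 : ∀ l : List V, IsLegalSeq G l → l.length ≤ 6)
    {a₁ a₂ : V} (h1 : a₁ ∈ A) (h2 : a₂ ∈ A) (hne : a₂ ≠ a₁)
    (hstar : G.neighborSet a₁ = B) : False := by
  have miss : ∀ L : List V, (∀ v ∈ L, v ∈ B) → L.length ≤ 4 →
      ∃ a ∈ A, ∀ u ∈ L, ¬ G.Adj u a := by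
    intro L hLB hlen
    refine exists_missed hbip hdom (SA := {a₁}) (by simpa using h1) ?_ hLB ?_
    · intro b hb
      have : b ∈ G.neighborSet a₁ := hstar ▸ hb
      exact ⟨a₁, rfl, this.symm⟩
    · rw [Set.ncard_singleton]; omega
  have hne' : G.neighborSet a₂ ≠ B := fun h => hftf a₂ a₁ hne (h.trans hstar.symm)
  have hsub : G.neighborSet a₂ ⊆ B := fun w h => mem_right_of_adj hbip h2 h
  have hex : ∃ b, b ∈ B ∧ b ∉ G.neighborSet a₂ := by
    by_contra hc
    push_neg at hc
    exact hne' (Set.Subset.antisymm hsub (fun b hb => hc b hb))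
  obtain ⟨b, hbB, hbn⟩ := hex
  obtain ⟨b', hb'⟩ := hiso a₂
  have hb'B : b' ∈ B := mem_right_of_adj hbip h2 hb'
  have hbb' : b' ≠ b := by
    rintro rfl
    exact hbn hb'
  obtain ⟨c₁, c₂, hc, hcleg⟩ := legal_pair_of_ne hftf hbb'
  have hcB : ∀ v ∈ [c₁, c₂], v ∈ B := by
    intro v hv
    simp only [List.mem_cons, List.mem_singleton, List.not_mem_nil, or_false] at hv
    rcases hc with ⟨rfl, rfl⟩ | ⟨rfl, rfl⟩ <;> rcases hv with rfl | rfl <;> assumption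
  obtain ⟨a₃, ha₃, hm₃⟩ := miss [c₁, c₂] hcB (by simp)
  obtain ⟨z₃, hz₃⟩ := hiso a₃
  obtain ⟨l3leg, l3B⟩ := chain_step hbip hcleg hcB ha₃ hm₃ hz₃
  obtain ⟨a₄, ha₄, hm₄⟩ := miss _ l3B (by simp)
  obtain ⟨z₄, hz₄⟩ := hiso a₄
  obtain ⟨l4leg, l4B⟩ := chain_step hbip l3leg l3B ha₄ hm₄ hz₄
  obtain ⟨a₅, ha₅, hm₅⟩ := miss _ l4B (by simp)
  obtain ⟨z₅, hz₅⟩ := hiso a₅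
  obtain ⟨l5leg, l5B⟩ := chain_step hbip l4leg l4B ha₅ hm₅ hz₅
  have hadj1b : G.Adj a₁ b := by
    have : b ∈ G.neighborSet a₁ := hstar ▸ hbB
    exact this
  have hA2 : IsLegalSeq G [a₂, a₁] := legal_two hne hadj1b (fun h => hbn h)
  have hA2mem : ∀ v ∈ [a₂, a₁], v ∈ A := by
    intro v hv
    simp only [List.mem_cons, List.mem_singleton, List.not_mem_nil, or_false] at hv
    rcases hv with rfl | rfl <;> assumption
  have hbig := legal_append hbip hiso hA2 l5leg hA2mem l5B
  have := hleg6 _ hbig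
  simp only [List.length_append, List.length_cons, List.length_singleton,
    List.length_nil] at this
  omega

end TDCore

namespace TDCore2

open TDAux TDAux2 TDAux3 TDMain TDCore

variable {V : Type*} {G : SimpleGraph V} {A B : Set V}

lemma no_pair_covers [Fintype V] (hbip : IsBipartitionOf G A B) (hftf : FalseTwinFree G)
    (hiso : NoIsolatedVerts G) (hdom : ∀ S : Set V, IsTotalDomSet G S → 6 ≤ S.ncard)
    (hleg6 : ∀ l : List V, IsLegalSeq G l → l.length ≤ 6)
    {a₁ a₂ : V} (h1 : a₁ ∈ A) (h2 : a₂ ∈ A) (hne : a₁ ≠ a₂)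
    (hcov : B ⊆ G.neighborSet a₁ ∪ G.neighborSet a₂) : False := by
  by_cases hP2 : ∃ p, G.Adj a₂ p ∧ ¬ G.Adj a₁ p
  · by_cases hP1 : ∃ p, G.Adj a₁ p ∧ ¬ G.Adj a₂ p
    · obtain ⟨p₁, hp₁a, hp₁n⟩ := hP1
      obtain ⟨p₂, hp₂a, hp₂n⟩ := hP2
      have hp₁B : p₁ ∈ B := mem_right_of_adj hbip h1 hp₁a
      have hp₂B : p₂ ∈ B := mem_right_of_adj hbip h2 hp₂a
      have hp12 : p₁ ≠ p₂ := by
        rintro rfl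
        exact hp₁n hp₂a
      have miss : ∀ L : List V, (∀ v ∈ L, v ∈ B) → L.length ≤ 3 →
          ∃ a ∈ A, ∀ u ∈ L, ¬ G.Adj u a := by
        intro L hLB hlen
        refine exists_missed hbip hdom (SA := {a₁, a₂}) ?_ ?_ hLB ?_
        · intro x hx
          rcases hx with rfl | rfl
          · exact h1
          · exact h2
        · intro b hb
          rcases hcov hb with h | h
          · exact ⟨a₁, Or.inl rfl, SimpleGraph.Adj.symm h⟩
          · exact ⟨a₂, Or.inr rfl, SimpleGraph.Adj.symm h⟩
        · have := Set.ncard_insert_le a₁ ({a₂} : Set V)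
          rw [Set.ncard_singleton] at this
          omega
      -- build a legal B-sequence of length 4
      obtain ⟨c₁, c₂, hc, hcleg⟩ := legal_pair_of_ne hftf hp12
      have hcB : ∀ v ∈ [c₁, c₂], v ∈ B := by
        intro v hv
        simp only [List.mem_cons, List.mem_singleton, List.not_mem_nil, or_false] at hv
        rcases hc with ⟨rfl, rfl⟩ | ⟨rfl, rfl⟩ <;> rcases hv with rfl | rfl <;> assumption
      obtain ⟨a₃, ha₃, hm₃⟩ := miss [c₁, c₂] hcB (by simp)
      obtain ⟨z₃, hz₃⟩ := hiso a₃
      obtain ⟨l3leg, l3B⟩ := chain_step hbip hcleg hcB ha₃ hm₃ hz₃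
      obtain ⟨a₄, ha₄, hm₄⟩ := miss _ l3B (by simp)
      obtain ⟨z₄, hz₄⟩ := hiso a₄
      obtain ⟨l4leg, l4B⟩ := chain_step hbip l3leg l3B ha₄ hm₄ hz₄
      have hfour : ∃ L : List V, IsLegalSeq G L ∧ (∀ v ∈ L, v ∈ B) ∧ L.length = 4 :=
        ⟨_, l4leg, l4B, by simp⟩
      have key2 : ∀ a ∈ A, a ≠ a₁ → a ≠ a₂ → G.Adj a p₂ := fun a ha hne1 hne2 =>
        P2_subset hbip hftf hiso hleg6 h1 h2 ha hne1 hne2 hne hfour hp₂a hp₂n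
      have key1 : ∀ a ∈ A, a ≠ a₁ → a ≠ a₂ → G.Adj a p₁ := fun a ha hne1 hne2 =>
        P2_subset hbip hftf hiso hleg6 h2 h1 ha hne2 hne1 (Ne.symm hne) hfour hp₁a hp₁n
      have hpB : ∀ v ∈ [p₁, p₂], v ∈ B := by
        intro v hv
        simp only [List.mem_cons, List.mem_singleton, List.not_mem_nil, or_false] at hv
        rcases hv with rfl | rfl <;> assumption
      obtain ⟨a', ha'A, hm'⟩ := miss [p₁, p₂] hpB (by simp)
      have hna1 : ¬ G.Adj p₁ a' := hm' p₁ (by simp)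
      have hna2 : ¬ G.Adj p₂ a' := hm' p₂ (by simp)
      by_cases he1 : a' = a₁
      · subst he1; exact hna1 hp₁a.symm
      by_cases he2 : a' = a₂
      · subst he2; exact hna2 hp₂a.symm
      exact hna2 (key2 a' ha'A he1 he2).symm
    · push_neg at hP1
      have hstar : G.neighborSet a₂ = B := by
        refine Set.Subset.antisymm (fun w h => mem_right_of_adj hbip h2 h) ?_
        intro b hb
        rcases hcov hb with h | h
        · exact hP1 b h
        · exact h
      exact no_cover_single hbip hftf hiso hdom hleg6 h2 h1 hne hstar
  · push_neg at hP2
    have hstar : G.neighborSet a₁ = B := by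
      refine Set.Subset.antisymm (fun w h => mem_right_of_adj hbip h1 h) ?_
      intro b hb
      rcases hcov hb with h | h
      · exact h
      · exact hP2 b h
    exact no_cover_single hbip hftf hiso hdom hleg6 h1 h2 (Ne.symm hne) hstar

end TDCore2

namespace TDFinal

open TDAux TDAux2 TDAux3 TDMain TDCore TDCore2

variable {V : Type*} {G : SimpleGraph V} {A B : Set V}

lemma main_side [Fintype V] (hbip : IsBipartitionOf G A B) (hftf : FalseTwinFree G)
    (hiso : NoIsolatedVerts G) (hdom : ∀ S : Set V, IsTotalDomSet G S → 6 ≤ S.ncard)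
    (hleg6 : ∀ l : List V, IsLegalSeq G l → l.length ≤ 6) :
    ∀ a₁ a₂ : V, a₁ ∈ A → a₂ ∈ A → a₁ ≠ a₂ →
      (G.neighborSet a₁ ∪ G.neighborSet a₂).ncard = B.ncard - 1 := by
  intro a₁ a₂ h1 h2 hne
  set U := G.neighborSet a₁ ∪ G.neighborSet a₂ with hU
  have hUB : U ⊆ B := by
    rintro v (h | h)
    · exact mem_right_of_adj hbip h1 h
    · exact mem_right_of_adj hbip h2 h
  have hnc : ¬ B ⊆ U := fun h =>
    no_pair_covers hbip hftf hiso hdom hleg6 h1 h2 hne h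
  obtain ⟨bs, hbsB, hbsU⟩ := Set.not_subset.mp hnc
  have huniq : ∀ b', b' ∈ B → b' ∉ U → b' = bs := by
    intro b' hb'B hb'U
    by_contra hneb
    -- choose β, β' ∈ B \ U and x ∈ N(β) \ N(β')
    have hββ' : ∃ β β' x, β ∈ B ∧ β' ∈ B ∧ β ∉ U ∧ β' ∉ U ∧ G.Adj β x ∧ ¬ G.Adj β' x := by
      obtain ⟨c₁, c₂, w, hcc, hadj, hnadj⟩ := ordered_pair hftf hneb
      rcases hcc with ⟨rfl, rfl⟩ | ⟨rfl, rfl⟩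
      · exact ⟨c₂, c₁, w, hbsB, hb'B, hbsU, hb'U, hadj, hnadj⟩
      · exact ⟨c₂, c₁, w, hb'B, hbsB, hb'U, hbsU, hadj, hnadj⟩
    obtain ⟨β, β', x, hβB, hβ'B, hβU, hβ'U, hβx, hβ'x⟩ := hββ'
    have hna₁β : ¬ G.Adj a₁ β := fun h => hβU (Or.inl h)
    have hna₂β : ¬ G.Adj a₂ β := fun h => hβU (Or.inr h)
    have hna₁β' : ¬ G.Adj a₁ β' := fun h => hβ'U (Or.inl h)
    have hna₂β' : ¬ G.Adj a₂ β' := fun h => hβ'U (Or.inr h)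
    have hxA : x ∈ A := mem_right_of_adj (bip_symm hbip) hβB hβx
    obtain ⟨y, hy⟩ := hiso β'
    have hyA : y ∈ A := mem_right_of_adj (bip_symm hbip) hβ'B hy
    -- ordered pair of a₁, a₂ with a witness
    obtain ⟨d₁, d₂, w₁, hd, hw₁adj, hw₁n⟩ := ordered_pair hftf hne
    have hd₁A : d₁ ∈ A := by rcases hd with ⟨rfl, rfl⟩ | ⟨rfl, rfl⟩ <;> assumption
    have hd₂A : d₂ ∈ A := by rcases hd with ⟨rfl, rfl⟩ | ⟨rfl, rfl⟩ <;> assumption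
    have hd₁₂ : d₁ ≠ d₂ := by
      rcases hd with ⟨rfl, rfl⟩ | ⟨rfl, rfl⟩
      · exact hne
      · exact Ne.symm hne
    have hnd₁β : ¬ G.Adj d₁ β := by rcases hd with ⟨rfl, rfl⟩ | ⟨rfl, rfl⟩ <;> assumption
    have hnd₂β : ¬ G.Adj d₂ β := by rcases hd with ⟨rfl, rfl⟩ | ⟨rfl, rfl⟩ <;> assumption
    have hnd₁β' : ¬ G.Adj d₁ β' := by rcases hd with ⟨rfl, rfl⟩ | ⟨rfl, rfl⟩ <;> assumption
    have hnd₂β' : ¬ G.Adj d₂ β' := by rcases hd with ⟨rfl, rfl⟩ | ⟨rfl, rfl⟩ <;> assumption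
    -- distinctness
    have hd₁x : d₁ ≠ x := by rintro rfl; exact hnd₁β hβx.symm
    have hd₂x : d₂ ≠ x := by rintro rfl; exact hnd₂β hβx.symm
    have hd₁y : d₁ ≠ y := by rintro rfl; exact hnd₁β' hy.symm
    have hd₂y : d₂ ≠ y := by rintro rfl; exact hnd₂β' hy.symm
    have hxy : x ≠ y := by rintro rfl; exact hβ'x hy
    have hnxβ' : ¬ G.Adj x β' := fun h => hβ'x h.symm
    -- the legal A-sequence of length 4
    have fourA : IsLegalSeq G [d₁, d₂, x, y] :=
      legal_four hd₁₂ hd₁x hd₂x hd₁y hd₂y hxy hw₁adj hw₁n hβx.symm hnd₁β hnd₂β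
        hy.symm hnd₁β' hnd₂β' hnxβ'
    have fourAmem : ∀ v ∈ [d₁, d₂, x, y], v ∈ A := by
      intro v hv
      simp only [List.mem_cons, List.mem_singleton, List.not_mem_nil, or_false] at hv
      rcases hv with rfl | rfl | rfl | rfl <;> assumption
    -- a legal B-sequence of length 3
    have missB : ∀ u v : V, u ∈ B → v ∈ B → u ≠ v →
        ∃ a ∈ A, ¬ G.Adj u a ∧ ¬ G.Adj v a := by
      intro u v hu hv huv
      have hns : ¬ A ⊆ G.neighborSet u ∪ G.neighborSet v := fun hcc =>
        no_pair_covers (bip_symm hbip) hftf hiso hdom hleg6 hu hv huv hcc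
      obtain ⟨a, haA, haU⟩ := Set.not_subset.mp hns
      exact ⟨a, haA, fun h => haU (Or.inl h), fun h => haU (Or.inr h)⟩
    obtain ⟨b₀, hb₀⟩ := hiso a₁
    have hb₀B : b₀ ∈ B := mem_right_of_adj hbip h1 hb₀
    have hb₀bs : b₀ ≠ bs := by
      rintro rfl
      exact hbsU (Or.inl hb₀)
    obtain ⟨c₁, c₂, hcc, hccleg⟩ := legal_pair_of_ne hftf hb₀bs
    have hccB : ∀ v ∈ [c₁, c₂], v ∈ B := by
      intro v hv
      simp only [List.mem_cons, List.mem_singleton, List.not_mem_nil, or_false] at hv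
      rcases hcc with ⟨rfl, rfl⟩ | ⟨rfl, rfl⟩ <;> rcases hv with rfl | rfl <;> assumption
    have hc₁₂ : c₁ ≠ c₂ := by
      rcases hcc with ⟨rfl, rfl⟩ | ⟨rfl, rfl⟩
      · exact hb₀bs
      · exact Ne.symm hb₀bs
    obtain ⟨a₃, ha₃A, hm₁, hm₂⟩ := missB c₁ c₂ (hccB c₁ (by simp)) (hccB c₂ (by simp)) hc₁₂
    obtain ⟨z₃, hz₃⟩ := hiso a₃
    have hmiss3 : ∀ u ∈ [c₁, c₂], ¬ G.Adj u a₃ := by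
      intro u hu
      simp only [List.mem_cons, List.mem_singleton, List.not_mem_nil, or_false] at hu
      rcases hu with rfl | rfl
      · exact hm₁
      · exact hm₂
    obtain ⟨l3leg, l3B⟩ := chain_step hbip hccleg hccB ha₃A hmiss3 hz₃
    -- combine: legal sequence of length 7
    have hbig := legal_append hbip hiso fourA l3leg fourAmem l3B
    have := hleg6 _ hbig
    simp only [List.length_append, List.length_cons, List.length_singleton,
      List.length_nil] at this
    omega
  have hUeq : U = B \ {bs} := by
    ext v
    constructor
    · intro hv
      refine ⟨hUB hv, ?_⟩
      simp only [Set.mem_singleton_iff]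
      rintro rfl
      exact hbsU hv
    · rintro ⟨hvB, hvne⟩
      by_contra hvU
      exact (show v ≠ bs by simpa using hvne) (huniq v hvB hvU)
  rw [hUeq, Set.ncard_diff_singleton_of_mem hbsB]

end TDFinal

/-- In a bipartite false twin-free graph without isolated vertices,
with bipartition `A ∪ B` and `γ_t(G) = γ_gr^t(G) = 6`, any two distinct vertices
of `A` together totally dominate all but exactly one vertex of `B`, and
symmetrically for `B`. -/
theorem neighbors_union_card_of_six {V : Type*} [Fintype V] (G : SimpleGraph V)
    (A B : Set V) (hbip : IsBipartitionOf G A B) (hftf : FalseTwinFree G)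
    (hiso : NoIsolatedVerts G)
    (ht : totalDomNum G = 6) (hg : grundyTotalDomNum G = 6) :
    (∀ a₁ a₂ : V, a₁ ∈ A → a₂ ∈ A → a₁ ≠ a₂ →
      (G.neighborSet a₁ ∪ G.neighborSet a₂).ncard = B.ncard - 1) ∧
    (∀ b₁ b₂ : V, b₁ ∈ B → b₂ ∈ B → b₁ ≠ b₂ →
      (G.neighborSet b₁ ∪ G.neighborSet b₂).ncard = A.ncard - 1) := by
  have hdom : ∀ S : Set V, IsTotalDomSet G S → 6 ≤ S.ncard := by
    intro S h
    have hle := TDAux3.domnum_le h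
    rw [ht] at hle
    exact hle
  have hleg6 : ∀ l : List V, IsLegalSeq G l → l.length ≤ 6 := by
    intro l h
    have hle := TDAux3.length_le_grundy hiso h
    rwa [hg] at hle
  exact ⟨TDFinal.main_side hbip hftf hiso hdom hleg6,
    TDFinal.main_side (TDAux2.bip_symm hbip) hftf hiso hdom hleg6⟩
end

section
/- Let n, k ∈ ℕ with k ≥ 3. Then there exists an (n−k)-regular bipartite false twin-free graph G on 2n vertices with γ_t(G) = 6 and γ_gr^t(G) = 6 if and only if n = k² − k + 1 and there exists a projective plane of order k − 1. -/
section Helpers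

variable {V : Type*} (G : SimpleGraph V)

theorem isLegalSeq_iff {l : List V} :
    IsLegalSeq G l ↔ l.Nodup ∧ ∀ i : ℕ, (hi : i < l.length) → 0 < i →
      ∃ w : V, G.Adj l[i] w ∧ ∀ j : ℕ, (hj : j < l.length) → j < i → ¬ G.Adj l[j] w := by
  unfold IsLegalSeq
  constructor
  · rintro ⟨h1, h2⟩
    refine ⟨h1, fun i hi hpos => ?_⟩
    obtain ⟨w, hw1, hw2⟩ := h2 ⟨i, hi⟩ hpos
    exact ⟨w, by simpa using hw1, fun j hj hji => by simpa using hw2 ⟨j, hj⟩ hji⟩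
  · rintro ⟨h1, h2⟩
    refine ⟨h1, fun i hpos => ?_⟩
    obtain ⟨w, hw1, hw2⟩ := h2 i i.isLt hpos
    exact ⟨w, by simpa using hw1, fun j hji => by simpa using hw2 j j.isLt hji⟩

theorem adj_mem_left {A B : Set V} (hbip : IsBipartitionOf G A B) {u w : V}
    (hu : u ∈ B) (h : G.Adj u w) : w ∈ A := by
  rcases hbip.2 h with ⟨h1, h2⟩ | ⟨h1, h2⟩
  · rcases hbip.1 u with ⟨hA, hB⟩ | ⟨hB, hA⟩
    · exact absurd hu hB
    · exact absurd h1 hA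
  · exact h2

theorem adj_mem_right {A B : Set V} (hbip : IsBipartitionOf G A B) {u w : V}
    (hu : u ∈ A) (h : G.Adj u w) : w ∈ B := by
  rcases hbip.2 h with ⟨h1, h2⟩ | ⟨h1, h2⟩
  · exact h2
  · rcases hbip.1 u with ⟨hA, hB⟩ | ⟨hB, hA⟩
    · exact absurd h1 hB
    · exact absurd hu hA

theorem not_adj_of_mem_left {A B : Set V} (hbip : IsBipartitionOf G A B) {u w : V}
    (hu : u ∈ A) (hw : w ∈ A) : ¬ G.Adj u w := fun h => by
  have := adj_mem_right G hbip hu h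
  rcases hbip.1 w with ⟨h1, h2⟩ | ⟨h1, h2⟩
  · exact h2 this
  · exact h2 hw

theorem isLegalSeq_append {A B : Set V} (hbip : IsBipartitionOf G A B)
    {lA lB : List V} (hA : ∀ x ∈ lA, x ∈ A) (hB : ∀ x ∈ lB, x ∈ B)
    (h1 : IsLegalSeq G lA) (h2 : IsLegalSeq G lB)
    (hni : ∀ v ∈ B, ∃ w, G.Adj v w) :
    IsLegalSeq G (lA ++ lB) := by
  rw [isLegalSeq_iff] at h1 h2 ⊢
  obtain ⟨h1n, h1l⟩ := h1
  obtain ⟨h2n, h2l⟩ := h2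
  constructor
  · refine List.Nodup.append h1n h2n ?_
    intro x hx hx'
    have hxA := hA x hx
    have hxB := hB x hx'
    rcases hbip.1 x with ⟨ha, hb⟩ | ⟨hb, ha⟩
    · exact hb hxB
    · exact ha hxA
  · intro i hi hpos
    rw [List.length_append] at hi
    by_cases hcase : i < lA.length
    · obtain ⟨w, hw1, hw2⟩ := h1l i hcase hpos
      refine ⟨w, by rwa [List.getElem_append_left hcase], ?_⟩
      intro j hj hji
      have hjA : j < lA.length := lt_trans hji hcase
      rw [List.getElem_append_left hjA]
      exact hw2 j hjA hji
    · push_neg at hcase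
      -- entry is in lB
      have hiB : i - lA.length < lB.length := by omega
      have hgetB : (lA ++ lB)[i]'(by rw [List.length_append]; omega)
          = lB[i - lA.length]'hiB := List.getElem_append_right hcase
      set b := lB[i - lA.length]'hiB with hb
      have hbB : b ∈ B := hB b (List.getElem_mem _)
      -- get a witness w ∈ A adjacent to b
      have key : ∃ w, G.Adj b w ∧ ∀ j : ℕ, (hj : j < lB.length) → j < i - lA.length →
          ¬ G.Adj (lB[j]'hj) w := by
        by_cases hzero : i - lA.length = 0
        · obtain ⟨w, hw⟩ := hni b hbB
          exact ⟨w, hw, fun j hj hji => by omega⟩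
        · exact h2l (i - lA.length) hiB (Nat.pos_of_ne_zero hzero)
      obtain ⟨w, hw1, hw2⟩ := key
      have hwA : w ∈ A := adj_mem_left G hbip hbB hw1
      refine ⟨w, by rw [hgetB]; exact hw1, ?_⟩
      intro j hj hji
      by_cases hjA : j < lA.length
      · rw [List.getElem_append_left hjA]
        exact not_adj_of_mem_left G hbip (hA _ (List.getElem_mem _)) hwA
      · push_neg at hjA
        have hjB : j - lA.length < lB.length := by omega
        rw [List.getElem_append_right hjA]
        exact hw2 (j - lA.length) hjB (by omega)

end Helpers
section Helpers2

variable {V : Type*} (G : SimpleGraph V)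

theorem IsBipartitionOf.swap {A B : Set V} (hbip : IsBipartitionOf G A B) :
    IsBipartitionOf G B A :=
  ⟨fun v => (hbip.1 v).symm, fun u v h => (hbip.2 h).symm⟩

theorem legal_concat {A B : Set V} (hbip : IsBipartitionOf G A B)
    {l : List V} (hlA : ∀ x ∈ l, x ∈ A) (hleg : IsLegalSeq G l)
    {w b : V} (hwA : w ∈ A) (hbB : b ∈ B) (hadj : G.Adj b w)
    (hbnew : ¬ ∃ a ∈ l, G.Adj b a) :
    IsLegalSeq G (l ++ [w]) := by
  rw [isLegalSeq_iff] at hleg ⊢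
  obtain ⟨hn, hl⟩ := hleg
  have hwl : w ∉ l := fun hw => hbnew ⟨w, hw, hadj⟩
  constructor
  · simpa using List.Nodup.append hn (List.nodup_singleton w)
      (by simpa using hwl)
  · intro i hi hpos
    simp only [List.length_append, List.length_singleton] at hi
    by_cases hcase : i < l.length
    · obtain ⟨u, hu1, hu2⟩ := hl i hcase hpos
      refine ⟨u, by rwa [List.getElem_append_left hcase], ?_⟩
      intro j hj hji
      have hjl : j < l.length := lt_trans hji hcase
      rw [List.getElem_append_left hjl]
      exact hu2 j hjl hji
    · have hieq : i = l.length := by omega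
      have hget : (l ++ [w])[i]'(by simp; omega) = w := by
        subst hieq; simp
      refine ⟨b, by rw [hget]; exact hadj.symm, ?_⟩
      intro j hj hji
      have hjl : j < l.length := by omega
      rw [List.getElem_append_left hjl]
      intro hadj'
      exact hbnew ⟨_, List.getElem_mem _, hadj'.symm⟩

theorem exists_cover_extension [Fintype V] {A B : Set V} (hbip : IsBipartitionOf G A B)
    (hni : ∀ v, ∃ w, G.Adj v w)
    {l : List V} (hlA : ∀ x ∈ l, x ∈ A) (hleg : IsLegalSeq G l) :
    ∃ l' : List V, IsLegalSeq G l' ∧ (∀ x ∈ l', x ∈ A) ∧ l.length ≤ l'.length ∧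
      ∀ b ∈ B, ∃ a ∈ l', G.Adj b a := by
  suffices H : ∀ (m : ℕ) (l : List V), (∀ x ∈ l, x ∈ A) → IsLegalSeq G l →
      (B \ {v | ∃ a ∈ l, G.Adj v a}).ncard = m →
      ∃ l' : List V, IsLegalSeq G l' ∧ (∀ x ∈ l', x ∈ A) ∧ l.length ≤ l'.length ∧
        ∀ b ∈ B, ∃ a ∈ l', G.Adj b a by
    exact H _ l hlA hleg rfl
  intro m
  induction m using Nat.strong_induction_on with
  | _ m IH =>
    intro l hlA hleg hcard
    by_cases hempty : B \ {v | ∃ a ∈ l, G.Adj v a} = ∅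
    · refine ⟨l, hleg, hlA, le_refl _, fun b hb => ?_⟩
      by_contra hcon
      exact (Set.eq_empty_iff_forall_notMem.mp hempty b) ⟨hb, hcon⟩
    · obtain ⟨b, hb⟩ := Set.nonempty_iff_ne_empty.mpr hempty
      obtain ⟨hbB, hbnew⟩ := hb
      obtain ⟨w, hw⟩ := hni b
      have hwA : w ∈ A := adj_mem_left G hbip hbB hw
      have hleg' := legal_concat G hbip hlA hleg hwA hbB hw hbnew
      have hlA' : ∀ x ∈ l ++ [w], x ∈ A := by
        intro x hx
        rcases List.mem_append.mp hx with h | h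
        · exact hlA x h
        · rw [List.mem_singleton.mp h]; exact hwA
      have hsub : B \ {v | ∃ a ∈ l ++ [w], G.Adj v a} ⊆
          (B \ {v | ∃ a ∈ l, G.Adj v a}) \ {b} := by
        intro x hx
        obtain ⟨hxB, hxn⟩ := hx
        refine ⟨⟨hxB, fun ⟨a, ha, hadj⟩ => hxn ⟨a, List.mem_append_left _ ha, hadj⟩⟩, ?_⟩
        intro hxb
        rw [Set.mem_singleton_iff] at hxb
        subst hxb
        exact hxn ⟨w, List.mem_append_right _ (List.mem_singleton_self w), hw⟩
      have hlt : (B \ {v | ∃ a ∈ l ++ [w], G.Adj v a}).ncard < m := by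
        calc (B \ {v | ∃ a ∈ l ++ [w], G.Adj v a}).ncard
            ≤ ((B \ {v | ∃ a ∈ l, G.Adj v a}) \ {b}).ncard :=
              Set.ncard_le_ncard hsub (Set.toFinite _)
          _ < (B \ {v | ∃ a ∈ l, G.Adj v a}).ncard :=
              Set.ncard_diff_singleton_lt_of_mem ⟨hbB, hbnew⟩ (Set.toFinite _)
          _ = m := hcard
      obtain ⟨l', h1, h2, h3, h4⟩ := IH _ hlt (l ++ [w]) hlA' hleg' rfl
      refine ⟨l', h1, h2, ?_, h4⟩
      rw [List.length_append, List.length_singleton] at h3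
      omega

theorem tds_append {A B : Set V} (hbip : IsBipartitionOf G A B)
    (hni : ∀ v, ∃ w, G.Adj v w)
    {lA lB : List V} (hA : ∀ x ∈ lA, x ∈ A) (hB : ∀ x ∈ lB, x ∈ B)
    (h1 : IsLegalSeq G lA) (h2 : IsLegalSeq G lB)
    (hcovB : ∀ b ∈ B, ∃ a ∈ lA, G.Adj b a)
    (hcovA : ∀ a ∈ A, ∃ b ∈ lB, G.Adj a b) :
    IsTotalDomSeq G (lA ++ lB) := by
  constructor
  · exact isLegalSeq_append G hbip hA hB h1 h2 (fun v _ => hni v)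
  · intro v
    rcases hbip.1 v with ⟨hvA, _⟩ | ⟨hvB, _⟩
    · obtain ⟨b, hb, hadj⟩ := hcovA v hvA
      exact ⟨b, List.mem_append_right _ hb, hadj⟩
    · obtain ⟨a, ha, hadj⟩ := hcovB v hvB
      exact ⟨a, List.mem_append_left _ ha, hadj⟩

theorem tds_length_le [Fintype V] {l : List V} (h : IsTotalDomSeq G l) :
    l.length ≤ Fintype.card V :=
  List.Nodup.length_le_card h.1.1

theorem grundy_set_bddAbove [Fintype V] :
    BddAbove {k : ℕ | ∃ l : List V, IsTotalDomSeq G l ∧ l.length = k} := by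
  refine ⟨Fintype.card V, fun m hm => ?_⟩
  obtain ⟨l, hl, rfl⟩ := hm
  exact tds_length_le G hl

end Helpers2
section Helpers3

theorem pick3 {α : Type*} {a b c : α} (P Q : α → Prop)
    (hPab : ¬(P a ∧ P b)) (hPac : ¬(P a ∧ P c)) (hPbc : ¬(P b ∧ P c))
    (hQab : ¬(Q a ∧ Q b)) (hQac : ¬(Q a ∧ Q c)) (hQbc : ¬(Q b ∧ Q c)) :
    (¬P a ∧ ¬Q a) ∨ (¬P b ∧ ¬Q b) ∨ (¬P c ∧ ¬Q c) := by
  tauto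

theorem exists_mem_not_mem_of_ncard_eq {α : Type*} {s t : Set α}
    (hs : s.Finite) (ht : t.Finite) (hcard : s.ncard = t.ncard) (hne : s ≠ t) :
    ∃ x ∈ s, x ∉ t := by
  by_contra h
  push_neg at h
  exact hne (Set.eq_of_subset_of_ncard_le h hcard.ge ht)

variable {V : Type*} (G : SimpleGraph V)

/-- In a regular false-twin-free graph, for distinct `u v` there is a neighbor
of `v` that is not a neighbor of `u`. -/
theorem exists_private_neighbor [Fintype V] (hftf : FalseTwinFree G)
    {d : ℕ} (hreg : ∀ v : V, (G.neighborSet v).ncard = d) {u v : V} (huv : u ≠ v) :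
    ∃ w, G.Adj v w ∧ ¬ G.Adj u w := by
  obtain ⟨w, hw1, hw2⟩ := exists_mem_not_mem_of_ncard_eq (Set.toFinite _) (Set.toFinite _)
    ((hreg v).trans (hreg u).symm) (fun h => hftf v u huv.symm h)
  exact ⟨w, hw1, hw2⟩

end Helpers3
section Helpers4

variable {V : Type*} (G : SimpleGraph V)

theorem isLegalSeq_three {x1 x2 x3 w2 w3 : V} (h12 : x1 ≠ x2) (h13 : x1 ≠ x3) (h23 : x2 ≠ x3)
    (ha2 : G.Adj x2 w2) (hn2 : ¬ G.Adj x1 w2)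
    (ha3 : G.Adj x3 w3) (hn31 : ¬ G.Adj x1 w3) (hn32 : ¬ G.Adj x2 w3) :
    IsLegalSeq G [x1, x2, x3] := by
  rw [isLegalSeq_iff]
  refine ⟨by simp [h12, h13, h23], ?_⟩
  intro i hi hpos
  simp only [List.length_cons, List.length_nil] at hi
  interval_cases i
  · refine ⟨w2, by simpa using ha2, ?_⟩
    intro j hj hji
    interval_cases j
    simpa using hn2
  · refine ⟨w3, by simpa using ha3, ?_⟩
    intro j hj hji
    interval_cases j
    · simpa using hn31
    · simpa using hn32

theorem isLegalSeq_four {x1 x2 x3 x4 w2 w3 w4 : V}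
    (h12 : x1 ≠ x2) (h13 : x1 ≠ x3) (h14 : x1 ≠ x4)
    (h23 : x2 ≠ x3) (h24 : x2 ≠ x4) (h34 : x3 ≠ x4)
    (ha2 : G.Adj x2 w2) (hn2 : ¬ G.Adj x1 w2)
    (ha3 : G.Adj x3 w3) (hn31 : ¬ G.Adj x1 w3) (hn32 : ¬ G.Adj x2 w3)
    (ha4 : G.Adj x4 w4) (hn41 : ¬ G.Adj x1 w4) (hn42 : ¬ G.Adj x2 w4)
    (hn43 : ¬ G.Adj x3 w4) :
    IsLegalSeq G [x1, x2, x3, x4] := by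
  rw [isLegalSeq_iff]
  refine ⟨by simp [h12, h13, h14, h23, h24, h34], ?_⟩
  intro i hi hpos
  simp only [List.length_cons, List.length_nil] at hi
  interval_cases i
  · refine ⟨w2, by simpa using ha2, ?_⟩
    intro j hj hji
    interval_cases j
    simpa using hn2
  · refine ⟨w3, by simpa using ha3, ?_⟩
    intro j hj hji
    interval_cases j
    · simpa using hn31
    · simpa using hn32
  · refine ⟨w4, by simpa using ha4, ?_⟩
    intro j hj hji
    interval_cases j
    · simpa using hn41
    · simpa using hn42
    · simpa using hn43

end Helpers4
section Forward

open Finset in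
theorem forward_dir {V : Type} [Fintype V] (G : SimpleGraph V) (A B : Set V)
    (n k : ℕ) (hk : 3 ≤ k)
    (hcard : Fintype.card V = 2 * n) (hbip : IsBipartitionOf G A B)
    (hftf : FalseTwinFree G) (hreg : ∀ v : V, (G.neighborSet v).ncard = n - k)
    (htd : totalDomNum G = 6) (hgr : grundyTotalDomNum G = 6) :
    n = k ^ 2 - k + 1 ∧
      ∃ (P L : Type) (m : Membership P L) (_ : Fintype P) (_ : Fintype L)
        (pp : @Configuration.ProjectivePlane P L m),
        @Configuration.ProjectivePlane.order P L m pp = k - 1 := by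
  classical
  -- no isolated vertices
  have hni : ∀ v : V, ∃ w, G.Adj v w := by
    intro v
    by_contra h
    push_neg at h
    have hempty : {m : ℕ | ∃ S : Set V, IsTotalDomSet G S ∧ S.ncard = m} = ∅ := by
      ext m
      simp only [Set.mem_setOf_eq, Set.mem_empty_iff_false, iff_false, not_exists]
      intro S hS
      obtain ⟨u, -, hadj⟩ := hS.1 v
      exact h u hadj
    rw [totalDomNum, hempty, Nat.sInf_empty] at htd
    omega
  -- V is nonempty
  have hVne : Nonempty V := by
    by_contra h
    have h0 : (0 : ℕ) ∈ {m : ℕ | ∃ S : Set V, IsTotalDomSet G S ∧ S.ncard = m} :=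
      ⟨∅, fun v => absurd ⟨v⟩ h, by simp⟩
    rw [totalDomNum] at htd
    have := Nat.sInf_le h0
    omega
  -- the degree is positive
  have hd1 : 1 ≤ n - k := by
    obtain ⟨v⟩ := hVne
    obtain ⟨w, hw⟩ := hni v
    have h2 : 0 < (G.neighborSet v).ncard :=
      (Set.ncard_pos (Set.toFinite _)).mpr ⟨w, hw⟩
    have h3 := hreg v
    omega
  have hkn : k + 1 ≤ n := by omega
  -- counting: degrees as finsets
  have hdegF : ∀ v : V, (univ.filter (fun w => G.Adj v w)).card = n - k := by
    intro v
    have h := hreg v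
    rw [Set.ncard_eq_toFinset_card'] at h
    convert h using 2
    ext w
    rw [Set.mem_toFinset]
    simp
  set Af : Finset V := univ.filter (· ∈ A) with hAf
  set Bf : Finset V := univ.filter (· ∈ B) with hBf
  have hmemAf : ∀ x, x ∈ Af ↔ x ∈ A := by intro x; simp [hAf]
  have hmemBf : ∀ x, x ∈ Bf ↔ x ∈ B := by intro x; simp [hBf]
  have hsplit : Af.card + Bf.card = 2 * n := by
    have hdisj : Disjoint Af Bf := by
      rw [Finset.disjoint_left]
      intro x hx hx'
      rw [hmemAf] at hx
      rw [hmemBf] at hx'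
      rcases hbip.1 x with ⟨h1, h2⟩ | ⟨h1, h2⟩
      · exact h2 hx'
      · exact h2 hx
    have huniv : Af ∪ Bf = univ := by
      ext x
      simp only [Finset.mem_union, Finset.mem_univ, iff_true]
      rw [hmemAf, hmemBf]
      rcases hbip.1 x with ⟨h1, _⟩ | ⟨h1, _⟩
      · exact Or.inl h1
      · exact Or.inr h1
    rw [← card_union_of_disjoint hdisj, huniv, ← hcard]
    rfl
  -- double counting edges between A and B
  have hABeq : Af.card = Bf.card := by
    set cnt : V → V → ℕ := fun a b => if a ∈ A ∧ G.Adj a b then 1 else 0 with hcnt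
    have hrow : ∀ a ∈ Af, ∑ b ∈ univ, cnt a b = n - k := by
      intro a ha
      rw [hmemAf] at ha
      have : ∀ b, cnt a b = if G.Adj a b then 1 else 0 := by
        intro b
        simp only [hcnt, ha, true_and]
      calc ∑ b ∈ univ, cnt a b = ∑ b ∈ univ, (if G.Adj a b then 1 else 0) := by
            exact Finset.sum_congr rfl (fun b _ => this b)
        _ = ((univ.filter (fun b => G.Adj a b)).card : ℕ) := by
            rw [Finset.sum_boole]; simp
        _ = n - k := hdegF a
    have hrow0 : ∀ a ∈ univ, a ∉ Af → ∑ b ∈ univ, cnt a b = 0 := by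
      intro a _ ha
      rw [hmemAf] at ha
      apply Finset.sum_eq_zero
      intro b _
      simp only [hcnt, ha, false_and, if_false]
    have hcol : ∀ b ∈ Bf, ∑ a ∈ univ, cnt a b = n - k := by
      intro b hb
      rw [hmemBf] at hb
      have : ∀ a, cnt a b = if G.Adj b a then 1 else 0 := by
        intro a
        simp only [hcnt]
        congr 1
        apply propext
        constructor
        · intro ⟨_, h⟩; exact h.symm
        · intro h; exact ⟨adj_mem_left G hbip hb h, h.symm⟩
      calc ∑ a ∈ univ, cnt a b = ∑ a ∈ univ, (if G.Adj b a then 1 else 0) := by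
            exact Finset.sum_congr rfl (fun a _ => this a)
        _ = ((univ.filter (fun a => G.Adj b a)).card : ℕ) := by
            rw [Finset.sum_boole]; simp
        _ = n - k := hdegF b
    have hcol0 : ∀ b ∈ univ, b ∉ Bf → ∑ a ∈ univ, cnt a b = 0 := by
      intro b _ hb
      rw [hmemBf] at hb
      have hbA : b ∈ A := by
        rcases hbip.1 b with ⟨h1, _⟩ | ⟨h1, _⟩
        · exact h1
        · exact absurd h1 hb
      apply Finset.sum_eq_zero
      intro a _
      simp only [hcnt]
      by_cases haA : a ∈ A
      · simp [not_adj_of_mem_left G hbip haA hbA]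
      · simp [haA]
    have key : Af.card * (n - k) = Bf.card * (n - k) := by
      calc Af.card * (n - k) = ∑ a ∈ Af, (n - k) := by
            rw [Finset.sum_const, smul_eq_mul]
        _ = ∑ a ∈ Af, ∑ b ∈ univ, cnt a b := (Finset.sum_congr rfl hrow).symm
        _ = ∑ a ∈ univ, ∑ b ∈ univ, cnt a b :=
            Finset.sum_subset (Finset.subset_univ Af) hrow0
        _ = ∑ b ∈ univ, ∑ a ∈ univ, cnt a b := Finset.sum_comm
        _ = ∑ b ∈ Bf, ∑ a ∈ univ, cnt a b :=
            (Finset.sum_subset (Finset.subset_univ Bf) hcol0).symm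
        _ = ∑ b ∈ Bf, (n - k) := Finset.sum_congr rfl hcol
        _ = Bf.card * (n - k) := by rw [Finset.sum_const, smul_eq_mul]
    exact Nat.eq_of_mul_eq_mul_right (by omega) key
  have hAn : Af.card = n := by omega
  have hBn : Bf.card = n := by omega
  -- complement degree counts
  have hcomplA : ∀ a ∈ A, (univ.filter (fun b => b ∈ B ∧ ¬ G.Adj a b)).card = k := by
    intro a ha
    have hsub : univ.filter (fun b => G.Adj a b) ⊆ Bf := by
      intro b hb
      rw [Finset.mem_filter] at hb
      rw [hmemBf]
      exact adj_mem_right G hbip ha hb.2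
    have heq : univ.filter (fun b => b ∈ B ∧ ¬ G.Adj a b)
        = Bf \ univ.filter (fun b => G.Adj a b) := by
      ext b
      simp only [Finset.mem_filter, Finset.mem_sdiff, Finset.mem_univ, true_and, hmemBf]
    rw [heq, Finset.card_sdiff_of_subset hsub, hdegF a, hBn]
    omega
  have hcomplB : ∀ b ∈ B, (univ.filter (fun a => a ∈ A ∧ ¬ G.Adj b a)).card = k := by
    intro b hb
    have hsub : univ.filter (fun a => G.Adj b a) ⊆ Af := by
      intro a ha
      rw [Finset.mem_filter] at ha
      rw [hmemAf]
      exact adj_mem_left G hbip hb ha.2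
    have heq : univ.filter (fun a => a ∈ A ∧ ¬ G.Adj b a)
        = Af \ univ.filter (fun a => G.Adj b a) := by
      ext a
      simp only [Finset.mem_filter, Finset.mem_sdiff, Finset.mem_univ, true_and, hmemAf]
    rw [heq, Finset.card_sdiff_of_subset hsub, hdegF b, hAn]
    omega
  -- both sides are nonempty
  have hsides : (∃ a, a ∈ A) ∧ (∃ b, b ∈ B) := by
    obtain ⟨v⟩ := hVne
    obtain ⟨w, hw⟩ := hni v
    rcases hbip.1 v with ⟨h1, _⟩ | ⟨h1, _⟩
    · exact ⟨⟨v, h1⟩, ⟨w, adj_mem_right G hbip h1 hw⟩⟩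
    · exact ⟨⟨w, adj_mem_left G hbip h1 hw⟩, ⟨v, h1⟩⟩
  obtain ⟨hAne, hBne⟩ := hsides
  -- construction of legal covering sequences of length ≥ 3
  have hcovgen : ∀ (X Y : Set V), IsBipartitionOf G X Y →
      (∀ y ∈ Y, 2 ≤ (univ.filter (fun x => x ∈ X ∧ ¬ G.Adj y x)).card) →
      (∃ y, y ∈ Y) →
      ∃ lX : List V, IsLegalSeq G lX ∧ (∀ x ∈ lX, x ∈ X) ∧ 3 ≤ lX.length ∧
        ∀ y ∈ Y, ∃ x ∈ lX, G.Adj y x := by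
    rintro X Y hbipXY h2 ⟨y₀, hy₀⟩
    obtain ⟨x₁, hx₁, x₂, hx₂, h12⟩ := Finset.one_lt_card.mp
      (lt_of_lt_of_le one_lt_two (h2 y₀ hy₀))
    rw [Finset.mem_filter] at hx₁ hx₂
    obtain ⟨x₃, hx₃⟩ := hni y₀
    have hx₃X : x₃ ∈ X := adj_mem_left G hbipXY hy₀ hx₃
    have h13 : x₁ ≠ x₃ := by rintro rfl; exact hx₁.2.2 hx₃
    have h23 : x₂ ≠ x₃ := by rintro rfl; exact hx₂.2.2 hx₃
    obtain ⟨w2, hw2a, hw2n⟩ := exists_private_neighbor G hftf hreg h12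
    have hleg : IsLegalSeq G [x₁, x₂, x₃] :=
      isLegalSeq_three G h12 h13 h23 hw2a hw2n hx₃.symm
        (fun h => hx₁.2.2 h.symm) (fun h => hx₂.2.2 h.symm)
    have hmem3 : ∀ x ∈ [x₁, x₂, x₃], x ∈ X := by
      intro x hx
      rcases List.mem_cons.mp hx with rfl | hx
      · exact hx₁.2.1
      rcases List.mem_cons.mp hx with rfl | hx
      · exact hx₂.2.1
      rcases List.mem_cons.mp hx with rfl | hx
      · exact hx₃X
      · exact absurd hx List.not_mem_nil
    obtain ⟨l', hl1, hl2, hl3, hl4⟩ := exists_cover_extension G hbipXY hni hmem3 hleg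
    exact ⟨l', hl1, hl2, le_trans (by simp) hl3, hl4⟩
  have h2A : ∀ b ∈ B, 2 ≤ (univ.filter (fun a => a ∈ A ∧ ¬ G.Adj b a)).card := by
    intro b hb; rw [hcomplB b hb]; omega
  have h2B : ∀ a ∈ A, 2 ≤ (univ.filter (fun b => b ∈ B ∧ ¬ G.Adj a b)).card := by
    intro a ha; rw [hcomplA a ha]; omega
  obtain ⟨lA, hlA_leg, hlA_mem, hlA_len, hlA_cov⟩ := hcovgen A B hbip h2A hBne
  obtain ⟨lB, hlB_leg, hlB_mem, hlB_len, hlB_cov⟩ := hcovgen B A hbip.swap h2B hAne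
  -- the Grundy bound: every total dominating sequence has length at most 6
  have hgr_le : ∀ l : List V, IsTotalDomSeq G l → l.length ≤ 6 := by
    intro l hl
    have hmem : l.length ∈ {m : ℕ | ∃ l' : List V, IsTotalDomSeq G l' ∧ l'.length = m} :=
      ⟨l, hl, rfl⟩
    have h6 := le_csSup (grundy_set_bddAbove G) hmem
    rw [grundyTotalDomNum] at hgr
    omega
  have happend : IsTotalDomSeq G (lA ++ lB) :=
    tds_append G hbip hni hlA_mem hlB_mem hlA_leg hlB_leg hlA_cov hlB_cov
  have hsum := hgr_le _ happend
  rw [List.length_append] at hsum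
  have hlA3 : lA.length = 3 := by omega
  have hlB3 : lB.length = 3 := by omega
  -- any two vertices on a side have a common non-neighbor on the other side
  have hcommon : ∀ (X Y : Set V) (lY : List V), IsBipartitionOf G X Y →
      (∀ x ∈ lY, x ∈ Y) → (∀ x ∈ X, ∃ y ∈ lY, G.Adj x y) → lY.length ≤ 3 →
      ∀ x₁ ∈ X, ∀ x₂ ∈ X, ∃ y ∈ Y, ¬ G.Adj x₁ y ∧ ¬ G.Adj x₂ y := by
    intro X Y lY hbipXY hmemY hcov hlen x₁ hx₁ x₂ hx₂
    by_contra hcon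
    have hy : ∀ y ∈ Y, G.Adj x₁ y ∨ G.Adj x₂ y := by
      intro y hyY
      by_contra hc
      push_neg at hc
      exact hcon ⟨y, hyY, hc.1, hc.2⟩
    set S : Set V := insert x₁ (insert x₂ {v | v ∈ lY}) with hS
    have hSdom : IsTotalDomSet G S := by
      intro v
      rcases hbipXY.1 v with ⟨hvX, _⟩ | ⟨hvY, _⟩
      · obtain ⟨y, hy1, hy2⟩ := hcov v hvX
        exact ⟨y, by simp [hS, hy1], hy2⟩
      · rcases hy v hvY with h | h
        · exact ⟨x₁, by simp [hS], h.symm⟩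
        · exact ⟨x₂, by simp [hS], h.symm⟩
    have h3 : ({v | v ∈ lY} : Set V).ncard ≤ 3 := by
      have hco : ({v | v ∈ lY} : Set V) = ↑lY.toFinset := by ext v; simp
      rw [hco, Set.ncard_coe_finset]
      calc lY.toFinset.card ≤ lY.length := lY.toFinset_card_le
        _ ≤ 3 := hlen
    have h2c : (insert x₂ {v | v ∈ lY} : Set V).ncard ≤ ({v | v ∈ lY} : Set V).ncard + 1 :=
      Set.ncard_insert_le _ _
    have h1c : S.ncard ≤ (insert x₂ {v | v ∈ lY} : Set V).ncard + 1 :=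
      Set.ncard_insert_le _ _
    rw [totalDomNum] at htd
    have hmemS : S.ncard ∈ {m : ℕ | ∃ T : Set V, IsTotalDomSet G T ∧ T.ncard = m} :=
      ⟨S, hSdom, rfl⟩
    have hle := Nat.sInf_le hmemS
    omega
  have hcommonA : ∀ a₁ ∈ A, ∀ a₂ ∈ A, ∃ b ∈ B, ¬G.Adj a₁ b ∧ ¬G.Adj a₂ b :=
    hcommon A B lB hbip hlB_mem hlB_cov (by omega)
  have hcommonB : ∀ b₁ ∈ B, ∀ b₂ ∈ B, ∃ a ∈ A, ¬G.Adj b₁ a ∧ ¬G.Adj b₂ a :=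
    hcommon B A lA hbip.swap hlA_mem hlA_cov (by omega)
  -- uniqueness: no two vertices share two common non-neighbors
  have huniq : ∀ u ∈ A, ∀ v ∈ A, ∀ b₁ ∈ B, ∀ b₂ ∈ B, u ≠ v → b₁ ≠ b₂ →
      ¬G.Adj u b₁ → ¬G.Adj u b₂ → ¬G.Adj v b₁ → ¬G.Adj v b₂ → False := by
    intro u hu v hv b₁ hb₁ b₂ hb₂ huv hbb hub1 hub2 hvb1 hvb2
    obtain ⟨w2, hw2a, hw2n⟩ := exists_private_neighbor G hftf hreg huv
    obtain ⟨p₃, hp₃a, hp₃n⟩ := exists_private_neighbor G hftf hreg hbb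
    obtain ⟨p₄, hp₄⟩ := hni b₁
    have hp₃A : p₃ ∈ A := adj_mem_left G hbip hb₂ hp₃a
    have hp₄A : p₄ ∈ A := adj_mem_left G hbip hb₁ hp₄
    have h13 : u ≠ p₃ := by rintro rfl; exact hub2 hp₃a.symm
    have h23 : v ≠ p₃ := by rintro rfl; exact hvb2 hp₃a.symm
    have h14 : u ≠ p₄ := by rintro rfl; exact hub1 hp₄.symm
    have h24 : v ≠ p₄ := by rintro rfl; exact hvb1 hp₄.symm
    have h34 : p₃ ≠ p₄ := by rintro rfl; exact hp₃n hp₄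
    have hleg : IsLegalSeq G [u, v, p₃, p₄] :=
      isLegalSeq_four G huv h13 h14 h23 h24 h34 hw2a hw2n
        hp₃a.symm hub2 hvb2
        hp₄.symm hub1 hvb1 (fun h => hp₃n h.symm)
    have hmem4 : ∀ x ∈ [u, v, p₃, p₄], x ∈ A := by
      intro x hx
      rcases List.mem_cons.mp hx with rfl | hx
      · exact hu
      rcases List.mem_cons.mp hx with rfl | hx
      · exact hv
      rcases List.mem_cons.mp hx with rfl | hx
      · exact hp₃A
      rcases List.mem_cons.mp hx with rfl | hx
      · exact hp₄A
      · exact absurd hx List.not_mem_nil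
    obtain ⟨l', hl1, hl2, hl3, hl4⟩ := exists_cover_extension G hbip hni hmem4 hleg
    have htds := tds_append G hbip hni hl2 hlB_mem hl1 hlB_leg hl4 hlB_cov
    have hfin := hgr_le _ htds
    rw [List.length_append] at hfin
    have hl4' : 4 ≤ l'.length := le_trans (by simp) hl3
    omega
  -- a second line through a point, avoiding a given line
  have hsecond : ∀ p ∈ A, ∀ b ∈ B, ∃ l, l ∈ B ∧ ¬ G.Adj p l ∧ l ≠ b := by
    intro p hp b hb
    have h2 : 1 < (univ.filter (fun b' => b' ∈ B ∧ ¬ G.Adj p b')).card := by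
      rw [hcomplA p hp]; omega
    obtain ⟨m₁, hm₁, m₂, hm₂, hmm⟩ := Finset.one_lt_card.mp h2
    rw [Finset.mem_filter] at hm₁ hm₂
    by_cases h : m₁ = b
    · subst h
      exact ⟨m₂, hm₂.2.1, hm₂.2.2, fun hh => hmm hh.symm⟩
    · exact ⟨m₁, hm₁.2.1, hm₁.2.2, h⟩
  -- construct a nondegenerate quadrilateral configuration
  obtain ⟨b₀, hb₀⟩ := hBne
  have h2b₀ : 1 < (univ.filter (fun a => a ∈ A ∧ ¬ G.Adj b₀ a)).card := by
    rw [hcomplB b₀ hb₀]; omega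
  obtain ⟨p₂, hp₂, p₃, hp₃, hp23⟩ := Finset.one_lt_card.mp h2b₀
  rw [Finset.mem_filter] at hp₂ hp₃
  have hp₂A : p₂ ∈ A := hp₂.2.1
  have hp₃A : p₃ ∈ A := hp₃.2.1
  have hp₂b₀ : ¬ G.Adj p₂ b₀ := fun h => hp₂.2.2 h.symm
  have hp₃b₀ : ¬ G.Adj p₃ b₀ := fun h => hp₃.2.2 h.symm
  -- l₃ : a second line through p₂
  obtain ⟨l₃, hl₃B, hp₂l₃, hl₃b₀⟩ := hsecond p₂ hp₂A b₀ hb₀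
  -- p₃ is not on l₃
  have hp₃l₃ : G.Adj p₃ l₃ := by
    by_contra hc
    exact huniq p₂ hp₂A p₃ hp₃A b₀ hb₀ l₃ hl₃B hp23 (Ne.symm hl₃b₀) hp₂b₀ hp₂l₃ hp₃b₀ hc
  -- l' : a second line through p₃
  obtain ⟨l', hl'B, hp₃l', hl'b₀⟩ := hsecond p₃ hp₃A b₀ hb₀
  have hl'l₃ : l' ≠ l₃ := by rintro rfl; exact hp₃l' hp₃l₃
  -- p₁ : a point on l' that is on neither b₀ nor l₃
  have h3l' : 2 < (univ.filter (fun a => a ∈ A ∧ ¬ G.Adj l' a)).card := by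
    rw [hcomplB l' hl'B]; omega
  obtain ⟨a1, a2, a3, ha1, ha2, ha3, h12', h13', h23'⟩ := Finset.two_lt_card_iff.mp h3l'
  rw [Finset.mem_filter] at ha1 ha2 ha3
  have hpick := pick3 (a := a1) (b := a2) (c := a3)
    (fun x => ¬ G.Adj x b₀) (fun x => ¬ G.Adj x l₃)
    (fun ⟨h1, h2⟩ => huniq a1 ha1.2.1 a2 ha2.2.1 b₀ hb₀ l' hl'B h12' (Ne.symm hl'b₀)
      h1 (fun h => ha1.2.2 h.symm) h2 (fun h => ha2.2.2 h.symm))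
    (fun ⟨h1, h2⟩ => huniq a1 ha1.2.1 a3 ha3.2.1 b₀ hb₀ l' hl'B h13' (Ne.symm hl'b₀)
      h1 (fun h => ha1.2.2 h.symm) h2 (fun h => ha3.2.2 h.symm))
    (fun ⟨h1, h2⟩ => huniq a2 ha2.2.1 a3 ha3.2.1 b₀ hb₀ l' hl'B h23' (Ne.symm hl'b₀)
      h1 (fun h => ha2.2.2 h.symm) h2 (fun h => ha3.2.2 h.symm))
    (fun ⟨h1, h2⟩ => huniq a1 ha1.2.1 a2 ha2.2.1 l₃ hl₃B l' hl'B h12' hl'l₃.symm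
      h1 (fun h => ha1.2.2 h.symm) h2 (fun h => ha2.2.2 h.symm))
    (fun ⟨h1, h2⟩ => huniq a1 ha1.2.1 a3 ha3.2.1 l₃ hl₃B l' hl'B h13' hl'l₃.symm
      h1 (fun h => ha1.2.2 h.symm) h2 (fun h => ha3.2.2 h.symm))
    (fun ⟨h1, h2⟩ => huniq a2 ha2.2.1 a3 ha3.2.1 l₃ hl₃B l' hl'B h23' hl'l₃.symm
      h1 (fun h => ha2.2.2 h.symm) h2 (fun h => ha3.2.2 h.symm))
  have hp₁ex : ∃ p₁, p₁ ∈ A ∧ G.Adj p₁ b₀ ∧ G.Adj p₁ l₃ := by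
    rcases hpick with ⟨h1, h2⟩ | ⟨h1, h2⟩ | ⟨h1, h2⟩
    · exact ⟨a1, ha1.2.1, not_not.mp h1, not_not.mp h2⟩
    · exact ⟨a2, ha2.2.1, not_not.mp h1, not_not.mp h2⟩
    · exact ⟨a3, ha3.2.1, not_not.mp h1, not_not.mp h2⟩
  obtain ⟨p₁, hp₁A, hp₁b₀, hp₁l₃⟩ := hp₁ex
  have hp₁p₂ : p₁ ≠ p₂ := by rintro rfl; exact hp₂b₀ hp₁b₀
  have hp₁p₃ : p₁ ≠ p₃ := by rintro rfl; exact hp₃b₀ hp₁b₀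
  -- l₁ : a line avoiding p₂ and p₃
  have h3p₁ : 2 < (univ.filter (fun b => b ∈ B ∧ ¬ G.Adj p₁ b)).card := by
    rw [hcomplA p₁ hp₁A]; omega
  obtain ⟨d1, d2, d3, hd1, hd2, hd3, hd12, hd13, hd23⟩ := Finset.two_lt_card_iff.mp h3p₁
  rw [Finset.mem_filter] at hd1 hd2 hd3
  have hpickl := pick3 (a := d1) (b := d2) (c := d3)
    (fun m => ¬ G.Adj p₂ m) (fun m => ¬ G.Adj p₃ m)
    (fun ⟨h1, h2⟩ => huniq p₁ hp₁A p₂ hp₂A d1 hd1.2.1 d2 hd2.2.1 hp₁p₂ hd12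
      hd1.2.2 hd2.2.2 h1 h2)
    (fun ⟨h1, h2⟩ => huniq p₁ hp₁A p₂ hp₂A d1 hd1.2.1 d3 hd3.2.1 hp₁p₂ hd13
      hd1.2.2 hd3.2.2 h1 h2)
    (fun ⟨h1, h2⟩ => huniq p₁ hp₁A p₂ hp₂A d2 hd2.2.1 d3 hd3.2.1 hp₁p₂ hd23
      hd2.2.2 hd3.2.2 h1 h2)
    (fun ⟨h1, h2⟩ => huniq p₁ hp₁A p₃ hp₃A d1 hd1.2.1 d2 hd2.2.1 hp₁p₃ hd12
      hd1.2.2 hd2.2.2 h1 h2)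
    (fun ⟨h1, h2⟩ => huniq p₁ hp₁A p₃ hp₃A d1 hd1.2.1 d3 hd3.2.1 hp₁p₃ hd13
      hd1.2.2 hd3.2.2 h1 h2)
    (fun ⟨h1, h2⟩ => huniq p₁ hp₁A p₃ hp₃A d2 hd2.2.1 d3 hd3.2.1 hp₁p₃ hd23
      hd2.2.2 hd3.2.2 h1 h2)
  have hl₁ex : ∃ l₁, l₁ ∈ B ∧ G.Adj p₂ l₁ ∧ G.Adj p₃ l₁ := by
    rcases hpickl with ⟨h1, h2⟩ | ⟨h1, h2⟩ | ⟨h1, h2⟩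
    · exact ⟨d1, hd1.2.1, not_not.mp h1, not_not.mp h2⟩
    · exact ⟨d2, hd2.2.1, not_not.mp h1, not_not.mp h2⟩
    · exact ⟨d3, hd3.2.1, not_not.mp h1, not_not.mp h2⟩
  obtain ⟨l₁, hl₁B, hp₂l₁, hp₃l₁⟩ := hl₁ex
  -- now build the projective plane on the subtypes
  let P : Type := {x : V // x ∈ A}
  let L : Type := {x : V // x ∈ B}
  letI mPL : Membership P L := ⟨fun l p => ¬ G.Adj ↑p ↑l⟩
  have hep : ∀ l : L, ∃ p : P, p ∉ l := by
    intro l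
    obtain ⟨w, hw⟩ := hni ↑l
    exact ⟨⟨w, adj_mem_left G hbip l.2 hw⟩, fun h => h hw.symm⟩
  have hel : ∀ p : P, ∃ l : L, p ∉ l := by
    intro p
    obtain ⟨w, hw⟩ := hni ↑p
    exact ⟨⟨w, adj_mem_right G hbip p.2 hw⟩, fun h => h hw⟩
  have heq_or : ∀ {q₁ q₂ : P} {m₁ m₂ : L}, q₁ ∈ m₁ → q₂ ∈ m₁ → q₁ ∈ m₂ → q₂ ∈ m₂ →
      q₁ = q₂ ∨ m₁ = m₂ := by
    intro q₁ q₂ m₁ m₂ h1 h2 h3 h4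
    by_contra hc
    push_neg at hc
    exact huniq ↑q₁ q₁.2 ↑q₂ q₂.2 ↑m₁ m₁.2 ↑m₂ m₂.2
      (fun h => hc.1 (Subtype.ext h)) (fun h => hc.2 (Subtype.ext h)) h1 h3 h2 h4
  have hmkp : ∀ m₁ m₂ : L, ∃ q : P, q ∈ m₁ ∧ q ∈ m₂ := by
    intro m₁ m₂
    obtain ⟨a, haA, h1, h2⟩ := hcommonB ↑m₁ m₁.2 ↑m₂ m₂.2
    exact ⟨⟨a, haA⟩, fun h => h1 h.symm, fun h => h2 h.symm⟩
  have hmkl : ∀ q₁ q₂ : P, ∃ m : L, q₁ ∈ m ∧ q₂ ∈ m := by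
    intro q₁ q₂
    obtain ⟨b, hbB, h1, h2⟩ := hcommonA ↑q₁ q₁.2 ↑q₂ q₂.2
    exact ⟨⟨b, hbB⟩, h1, h2⟩
  have hconf : ∃ (q₁ q₂ q₃ : P) (m₁ m₂ m₃ : L),
      q₁ ∉ m₂ ∧ q₁ ∉ m₃ ∧ q₂ ∉ m₁ ∧ q₂ ∈ m₂ ∧ q₂ ∈ m₃ ∧ q₃ ∉ m₁ ∧ q₃ ∈ m₂ ∧ q₃ ∉ m₃ := by
    refine ⟨⟨p₁, hp₁A⟩, ⟨p₂, hp₂A⟩, ⟨p₃, hp₃A⟩, ⟨l₁, hl₁B⟩, ⟨b₀, hb₀⟩, ⟨l₃, hl₃B⟩,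
      fun h => h hp₁b₀, fun h => h hp₁l₃, fun h => h hp₂l₁, hp₂b₀, hp₂l₃,
      fun h => h hp₃l₁, hp₃b₀, fun h => h hp₃l₃⟩
  let pp : Configuration.ProjectivePlane P L :=
    { exists_point := hep
      exists_line := hel
      eq_or_eq := heq_or
      mkPoint := fun {m₁ m₂} _ => (hmkp m₁ m₂).choose
      mkPoint_ax := fun {m₁ m₂} _ => (hmkp m₁ m₂).choose_spec
      mkLine := fun {q₁ q₂} _ => (hmkl q₁ q₂).choose
      mkLine_ax := fun {q₁ q₂} _ => (hmkl q₁ q₂).choose_spec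
      exists_config := hconf }
  have hlc : ∀ p : P, Configuration.lineCount L p = k := by
    intro p
    have e : {l : L // p ∈ l} ≃ {x : V // x ∈ B ∧ ¬ G.Adj ↑p x} :=
      Equiv.subtypeSubtypeEquivSubtypeInter (fun x => x ∈ B) (fun x => ¬ G.Adj ↑p x)
    rw [Configuration.lineCount, Nat.card_congr e, Nat.card_eq_fintype_card]
    rw [Fintype.card_subtype]
    exact hcomplA ↑p p.2
  have hordk : @Configuration.ProjectivePlane.order P L mPL pp = k - 1 := by
    obtain ⟨a₀, ha₀⟩ := hAne
    have h1 := @Configuration.ProjectivePlane.lineCount_eq P L mPL pp _ _ (⟨a₀, ha₀⟩ : P)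
    rw [hlc] at h1
    omega
  have hcardP : Fintype.card P = n := by
    show Fintype.card {x : V // x ∈ A} = n
    rw [Fintype.card_subtype]
    rw [← hAn, hAf]
  have hn : n = k ^ 2 - k + 1 := by
    have h1 := @Configuration.ProjectivePlane.card_points P L mPL pp _ _
    rw [hordk, hcardP] at h1
    obtain ⟨q, rfl⟩ : ∃ q, k = q + 1 := ⟨k - 1, by omega⟩
    have e2 : q + 1 - 1 = q := by omega
    rw [e2] at h1
    have e1 : (q + 1) ^ 2 = q ^ 2 + 2 * q + 1 := by ring
    rw [e1]
    generalize q ^ 2 = Q at h1 ⊢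
    omega
  exact ⟨hn, P, L, mPL, inferInstance, inferInstance, pp, hordk⟩

end Forward
section Backward

variable (P L : Type*) [Membership P L]

/-- The bipartite non-incidence graph of a point-line configuration. -/
def sumGraph : SimpleGraph (P ⊕ L) where
  Adj x y := ∃ (p : P) (l : L), p ∉ l ∧
    ((x = .inl p ∧ y = .inr l) ∨ (x = .inr l ∧ y = .inl p))
  symm := by
    constructor
    rintro x y ⟨p, l, h, ⟨h1, h2⟩ | ⟨h1, h2⟩⟩
    · exact ⟨p, l, h, Or.inr ⟨h2, h1⟩⟩
    · exact ⟨p, l, h, Or.inl ⟨h2, h1⟩⟩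
  loopless := by
    constructor
    rintro x ⟨p, l, h, ⟨h1, h2⟩ | ⟨h1, h2⟩⟩ <;> subst h1 <;> simp at h2

variable {P L}

@[simp] theorem sumGraph_adj_inl_inr {p : P} {l : L} :
    (sumGraph P L).Adj (.inl p) (.inr l) ↔ p ∉ l := by
  constructor
  · rintro ⟨p', l', h, ⟨h1, h2⟩ | ⟨h1, h2⟩⟩
    · rw [Sum.inl.injEq] at h1
      rw [Sum.inr.injEq] at h2
      subst h1; subst h2; exact h
    · simp at h1
  · intro h
    exact ⟨p, l, h, Or.inl ⟨rfl, rfl⟩⟩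

@[simp] theorem sumGraph_adj_inr_inl {p : P} {l : L} :
    (sumGraph P L).Adj (.inr l) (.inl p) ↔ p ∉ l := by
  constructor
  · rintro ⟨p', l', h, ⟨h1, h2⟩ | ⟨h1, h2⟩⟩
    · simp at h1
    · rw [Sum.inr.injEq] at h1
      rw [Sum.inl.injEq] at h2
      subst h1; subst h2; exact h
  · intro h
    exact ⟨p, l, h, Or.inr ⟨rfl, rfl⟩⟩

@[simp] theorem sumGraph_adj_inl_inl {p q : P} :
    ¬ (sumGraph P L).Adj (.inl p) (.inl q) := by
  rintro ⟨p', l', h, ⟨h1, h2⟩ | ⟨h1, h2⟩⟩ <;> simp at h2 h1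

@[simp] theorem sumGraph_adj_inr_inr {l m : L} :
    ¬ (sumGraph P L).Adj (.inr l) (.inr m) := by
  rintro ⟨p', l', h, ⟨h1, h2⟩ | ⟨h1, h2⟩⟩ <;> simp at h2 h1

theorem sumGraph_adj_inl {p : P} {x : P ⊕ L} (h : (sumGraph P L).Adj (.inl p) x) :
    ∃ l : L, x = .inr l ∧ p ∉ l := by
  cases x with
  | inl q => exact absurd h (sumGraph_adj_inl_inl)
  | inr l => exact ⟨l, rfl, sumGraph_adj_inl_inr.mp h⟩

theorem sumGraph_adj_inr {l : L} {x : P ⊕ L} (h : (sumGraph P L).Adj (.inr l) x) :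
    ∃ p : P, x = .inl p ∧ p ∉ l := by
  cases x with
  | inl q => exact ⟨q, rfl, sumGraph_adj_inr_inl.mp h⟩
  | inr m => exact absurd h (sumGraph_adj_inr_inr)

theorem four_points_false
    (heqq : ∀ {p₁ p₂ : P} {l₁ l₂ : L}, p₁ ∈ l₁ → p₂ ∈ l₁ → p₁ ∈ l₂ → p₂ ∈ l₂ →
      p₁ = p₂ ∨ l₁ = l₂)
    {l : List (P ⊕ L)} (hleg : IsLegalSeq (sumGraph P L) l)
    {i1 i2 i3 i4 : Fin l.length} (h12 : i1 < i2) (h23 : i2 < i3) (h34 : i3 < i4)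
    {p1 p2 p3 p4 : P}
    (e1 : l.get i1 = .inl p1) (e2 : l.get i2 = .inl p2)
    (e3 : l.get i3 = .inl p3) (e4 : l.get i4 = .inl p4) : False := by
  obtain ⟨hnd, hcond⟩ := hleg
  have hp12 : p1 ≠ p2 := by
    intro h
    subst h
    have : i1 = i2 := by
      apply List.nodup_iff_injective_get.mp hnd
      rw [e1, e2]
    omega
  have hpos3 : 0 < (i3 : ℕ) := by omega
  have hpos4 : 0 < (i4 : ℕ) := by omega
  obtain ⟨w3, hw3a, hw3n⟩ := hcond i3 hpos3
  obtain ⟨w4, hw4a, hw4n⟩ := hcond i4 hpos4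
  rw [e3] at hw3a
  rw [e4] at hw4a
  obtain ⟨m3, rfl, hm3⟩ := sumGraph_adj_inl hw3a
  obtain ⟨m4, rfl, hm4⟩ := sumGraph_adj_inl hw4a
  have h1m3 : p1 ∈ m3 := by
    have := hw3n i1 (by omega)
    rw [e1] at this
    simpa using this
  have h2m3 : p2 ∈ m3 := by
    have := hw3n i2 (by omega)
    rw [e2] at this
    simpa using this
  have h1m4 : p1 ∈ m4 := by
    have := hw4n i1 (by omega)
    rw [e1] at this
    simpa using this
  have h2m4 : p2 ∈ m4 := by
    have := hw4n i2 (by omega)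
    rw [e2] at this
    simpa using this
  have h3m4 : p3 ∈ m4 := by
    have := hw4n i3 (by omega)
    rw [e3] at this
    simpa using this
  rcases heqq h1m3 h2m3 h1m4 h2m4 with h | h
  · exact hp12 h
  · rw [← h] at h3m4
    exact hm3 h3m4

theorem four_lines_false
    (heqq : ∀ {p₁ p₂ : P} {l₁ l₂ : L}, p₁ ∈ l₁ → p₂ ∈ l₁ → p₁ ∈ l₂ → p₂ ∈ l₂ →
      p₁ = p₂ ∨ l₁ = l₂)
    {l : List (P ⊕ L)} (hleg : IsLegalSeq (sumGraph P L) l)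
    {i1 i2 i3 i4 : Fin l.length} (h12 : i1 < i2) (h23 : i2 < i3) (h34 : i3 < i4)
    {q1 q2 q3 q4 : L}
    (e1 : l.get i1 = .inr q1) (e2 : l.get i2 = .inr q2)
    (e3 : l.get i3 = .inr q3) (e4 : l.get i4 = .inr q4) : False := by
  obtain ⟨hnd, hcond⟩ := hleg
  have hq12 : q1 ≠ q2 := by
    intro h
    subst h
    have : i1 = i2 := by
      apply List.nodup_iff_injective_get.mp hnd
      rw [e1, e2]
    omega
  have hpos3 : 0 < (i3 : ℕ) := by omega
  have hpos4 : 0 < (i4 : ℕ) := by omega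
  obtain ⟨w3, hw3a, hw3n⟩ := hcond i3 hpos3
  obtain ⟨w4, hw4a, hw4n⟩ := hcond i4 hpos4
  rw [e3] at hw3a
  rw [e4] at hw4a
  obtain ⟨x3, rfl, hx3⟩ := sumGraph_adj_inr hw3a
  obtain ⟨x4, rfl, hx4⟩ := sumGraph_adj_inr hw4a
  have h31 : x3 ∈ q1 := by
    have := hw3n i1 (by omega)
    rw [e1] at this
    simpa using this
  have h32 : x3 ∈ q2 := by
    have := hw3n i2 (by omega)
    rw [e2] at this
    simpa using this
  have h41 : x4 ∈ q1 := by
    have := hw4n i1 (by omega)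
    rw [e1] at this
    simpa using this
  have h42 : x4 ∈ q2 := by
    have := hw4n i2 (by omega)
    rw [e2] at this
    simpa using this
  have h43 : x4 ∈ q3 := by
    have := hw4n i3 (by omega)
    rw [e3] at this
    simpa using this
  rcases heqq h31 h41 h32 h42 with h | h
  · rw [h] at hx3
    exact hx3 h43
  · exact hq12 h

end Backward
theorem exists_four_ordered {N : ℕ} (s : Finset (Fin N)) (h : 4 ≤ s.card) :
    ∃ i1 i2 i3 i4 : Fin N, i1 ∈ s ∧ i2 ∈ s ∧ i3 ∈ s ∧ i4 ∈ s ∧ i1 < i2 ∧ i2 < i3 ∧ i3 < i4 := by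
  obtain ⟨t, hts, htc⟩ := Finset.exists_subset_card_eq h
  let e := t.orderIsoOfFin htc
  have h01 : e 0 < e 1 := e.strictMono (by decide)
  have h12 : e 1 < e 2 := e.strictMono (by decide)
  have h23 : e 2 < e 3 := e.strictMono (by decide)
  exact ⟨e 0, e 1, e 2, e 3, hts (e 0).2, hts (e 1).2, hts (e 2).2, hts (e 3).2,
    Subtype.coe_lt_coe.mpr h01, Subtype.coe_lt_coe.mpr h12, Subtype.coe_lt_coe.mpr h23⟩
section Backward2

open Finset in
theorem backward_dir (n k : ℕ) (hk : 3 ≤ k) (hn : n = k ^ 2 - k + 1)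
    (P L : Type) [Membership P L] [Fintype P] [Fintype L]
    [pp : Configuration.ProjectivePlane P L]
    (hord : Configuration.ProjectivePlane.order P L = k - 1) :
    ∃ (V : Type) (_ : Fintype V) (G : SimpleGraph V) (A B : Set V),
        Fintype.card V = 2 * n ∧ IsBipartitionOf G A B ∧ FalseTwinFree G ∧
        (∀ v : V, (G.neighborSet v).ncard = n - k) ∧
        totalDomNum G = 6 ∧ grundyTotalDomNum G = 6 := by
  classical
  obtain ⟨q, rfl⟩ : ∃ q, k = q + 1 := ⟨k - 1, by omega⟩
  have hq2 : 2 ≤ q := by omega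
  have hnq : n = q ^ 2 + q + 1 := by
    have e1 : (q + 1) ^ 2 = q ^ 2 + 2 * q + 1 := by ring
    rw [hn, e1]
    generalize q ^ 2 = Q
    omega
  have hordq : Configuration.ProjectivePlane.order P L = q := by simpa using hord
  have hlc : ∀ p : P, Configuration.lineCount L p = q + 1 := fun p => by
    rw [Configuration.ProjectivePlane.lineCount_eq L p, hordq]
  have hpc : ∀ l : L, Configuration.pointCount P l = q + 1 := fun l => by
    rw [Configuration.ProjectivePlane.pointCount_eq P l, hordq]
  have hcardP : Fintype.card P = n := by
    rw [Configuration.ProjectivePlane.card_points P L, hordq, hnq]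
  have hcardL : Fintype.card L = n := by
    rw [Configuration.ProjectivePlane.card_lines P L, hordq, hnq]
  have hqsq : q ≤ q ^ 2 := Nat.le_self_pow (by norm_num) q
  have hqn : q + 2 ≤ n := by omega
  have heqq : ∀ {p₁ p₂ : P} {l₁ l₂ : L}, p₁ ∈ l₁ → p₂ ∈ l₁ → p₁ ∈ l₂ → p₂ ∈ l₂ →
      p₁ = p₂ ∨ l₁ = l₂ :=
    fun h1 h2 h3 h4 => Configuration.Nondegenerate.eq_or_eq h1 h2 h3 h4
  have hpts2 : ∀ l : L, ∃ p1 p2 : P, p1 ≠ p2 ∧ p1 ∈ l ∧ p2 ∈ l := by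
    intro l
    have h2 : 1 < Nat.card {p : P // p ∈ l} := by
      have := hpc l
      rw [Configuration.pointCount] at this
      omega
    rw [Nat.card_eq_fintype_card] at h2
    obtain ⟨a, b, hab⟩ := Fintype.exists_pair_of_one_lt_card h2
    exact ⟨a.1, b.1, fun h => hab (Subtype.ext h), a.2, b.2⟩
  have hlines2 : ∀ p : P, ∃ l1 l2 : L, l1 ≠ l2 ∧ p ∈ l1 ∧ p ∈ l2 := by
    intro p
    have h2 : 1 < Nat.card {l : L // p ∈ l} := by
      have := hlc p
      rw [Configuration.lineCount] at this
      omega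
    rw [Nat.card_eq_fintype_card] at h2
    obtain ⟨a, b, hab⟩ := Fintype.exists_pair_of_one_lt_card h2
    exact ⟨a.1, b.1, fun h => hab (Subtype.ext h), a.2, b.2⟩
  have hPne : Nonempty P := Fintype.card_pos_iff.mp (by rw [hcardP]; omega)
  have hLne : Nonempty L := Fintype.card_pos_iff.mp (by rw [hcardL]; omega)
  -- separation lemmas
  have hsep : ∀ p p' : P, p ≠ p' → ∃ l : L, p ∈ l ∧ p' ∉ l := by
    intro p p' hne
    obtain ⟨m1, m2, hm, h1, h2⟩ := hlines2 p
    by_cases hc : p' ∈ m1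
    · refine ⟨m2, h2, fun hc2 => ?_⟩
      rcases heqq h1 hc h2 hc2 with h | h
      · exact hne h
      · exact hm h
    · exact ⟨m1, h1, hc⟩
  have hsepl : ∀ l l' : L, l ≠ l' → ∃ p : P, p ∈ l ∧ p ∉ l' := by
    intro l l' hne
    obtain ⟨a, b, hab, ha, hb⟩ := hpts2 l
    by_cases hc : a ∈ l'
    · refine ⟨b, hb, fun hc2 => ?_⟩
      rcases heqq ha hb hc hc2 with h | h
      · exact hab h
      · exact hne h
    · exact ⟨a, ha, hc⟩
  -- a triangle of points and lines
  obtain ⟨l₀⟩ := hLne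
  obtain ⟨p₁, hp₁⟩ := Configuration.Nondegenerate.exists_point (P := P) l₀
  obtain ⟨p₂, p₃, hp23, hp₂l₀, hp₃l₀⟩ := hpts2 l₀
  have hp12 : p₁ ≠ p₂ := by rintro rfl; exact hp₁ hp₂l₀
  have hp13 : p₁ ≠ p₃ := by rintro rfl; exact hp₁ hp₃l₀
  have hnc : ∀ m : L, ¬ (p₁ ∈ m ∧ p₂ ∈ m ∧ p₃ ∈ m) := by
    rintro m ⟨h1, h2, h3⟩
    rcases heqq h2 h3 hp₂l₀ hp₃l₀ with h | h
    · exact hp23 h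
    · subst h; exact hp₁ h1
  set l₁ : L := Configuration.HasLines.mkLine hp23 with hl₁def
  set l₂ : L := Configuration.HasLines.mkLine hp13 with hl₂def
  set l₃ : L := Configuration.HasLines.mkLine hp12 with hl₃def
  have hax1 : p₂ ∈ l₁ ∧ p₃ ∈ l₁ := Configuration.HasLines.mkLine_ax hp23
  have hax2 : p₁ ∈ l₂ ∧ p₃ ∈ l₂ := Configuration.HasLines.mkLine_ax hp13
  have hax3 : p₁ ∈ l₃ ∧ p₂ ∈ l₃ := Configuration.HasLines.mkLine_ax hp12
  have hp₁l₁ : p₁ ∉ l₁ := fun h => hnc l₁ ⟨h, hax1.1, hax1.2⟩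
  have hp₂l₂ : p₂ ∉ l₂ := fun h => hnc l₂ ⟨hax2.1, h, hax2.2⟩
  have hp₃l₃ : p₃ ∉ l₃ := fun h => hnc l₃ ⟨hax3.1, hax3.2, h⟩
  have hl12 : l₁ ≠ l₂ := fun h => hp₂l₂ (by rw [← h]; exact hax1.1)
  have hl13 : l₁ ≠ l₃ := fun h => hp₃l₃ (by rw [← h]; exact hax1.2)
  have hl23 : l₂ ≠ l₃ := fun h => hp₃l₃ (by rw [← h]; exact hax2.2)
  have hncl : ∀ x : P, ¬ (x ∈ l₁ ∧ x ∈ l₂ ∧ x ∈ l₃) := by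
    rintro x ⟨h1, h2, h3⟩
    rcases heqq h1 hax1.2 h2 hax2.2 with h | h
    · subst h; exact hp₃l₃ h3
    · exact hl12 h
  -- total domination set of size six and coverage
  have hcover : ∀ v : P ⊕ L, ∃ u : P ⊕ L,
      (u = .inl p₁ ∨ u = .inl p₂ ∨ u = .inl p₃ ∨ u = .inr l₁ ∨ u = .inr l₂ ∨ u = .inr l₃) ∧
      (sumGraph P L).Adj v u := by
    rintro (x | m)
    · by_cases h1 : x ∈ l₁
      · by_cases h2 : x ∈ l₂
        · have h3 : x ∉ l₃ := fun h3 => hncl x ⟨h1, h2, h3⟩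
          exact ⟨.inr l₃, by tauto, sumGraph_adj_inl_inr.mpr h3⟩
        · exact ⟨.inr l₂, by tauto, sumGraph_adj_inl_inr.mpr h2⟩
      · exact ⟨.inr l₁, by tauto, sumGraph_adj_inl_inr.mpr h1⟩
    · by_cases h1 : p₁ ∈ m
      · by_cases h2 : p₂ ∈ m
        · have h3 : p₃ ∉ m := fun h3 => hnc m ⟨h1, h2, h3⟩
          exact ⟨.inl p₃, by tauto, sumGraph_adj_inr_inl.mpr h3⟩
        · exact ⟨.inl p₂, by tauto, sumGraph_adj_inr_inl.mpr h2⟩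
      · exact ⟨.inl p₁, by tauto, sumGraph_adj_inr_inl.mpr h1⟩
  -- the total domination number is 6
  have htd6 : totalDomNum (sumGraph P L) = 6 := by
    have hS6 : IsTotalDomSet (sumGraph P L)
        {.inl p₁, .inl p₂, .inl p₃, .inr l₁, .inr l₂, .inr l₃} := by
      intro v
      obtain ⟨u, hu, hadj⟩ := hcover v
      refine ⟨u, ?_, hadj⟩
      rcases hu with rfl | rfl | rfl | rfl | rfl | rfl <;> simp
    have hncard6 : ({.inl p₁, .inl p₂, .inl p₃, .inr l₁, .inr l₂, .inr l₃} :
        Set (P ⊕ L)).ncard = 6 := by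
      rw [Set.ncard_insert_of_notMem (by simp [hp12, hp13]),
          Set.ncard_insert_of_notMem (by simp [hp23]),
          Set.ncard_insert_of_notMem (by simp),
          Set.ncard_insert_of_notMem (by simp [hl12, hl13]),
          Set.ncard_insert_of_notMem (by simp [hl23]),
          Set.ncard_singleton]
    have hmem6 : (6 : ℕ) ∈
        {m : ℕ | ∃ S : Set (P ⊕ L), IsTotalDomSet (sumGraph P L) S ∧ S.ncard = m} :=
      ⟨_, hS6, hncard6⟩
    have hlow : ∀ S : Set (P ⊕ L), IsTotalDomSet (sumGraph P L) S → 6 ≤ S.ncard := by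
      intro S hS
      set TP : Set P := {x : P | Sum.inl x ∈ S} with hTP
      set TL : Set L := {m : L | Sum.inr m ∈ S} with hTL
      have hTP3 : 3 ≤ TP.ncard := by
        by_contra hcontra
        push_neg at hcontra
        have hline : ∃ m : L, ∀ x ∈ TP, x ∈ m := by
          by_cases hex : ∃ a b : P, a ∈ TP ∧ b ∈ TP ∧ a ≠ b
          · obtain ⟨a, b, ha, hb, hab⟩ := hex
            refine ⟨Configuration.HasLines.mkLine hab, fun x hx => ?_⟩
            by_cases hxa : x = a
            · subst hxa; exact (Configuration.HasLines.mkLine_ax hab).1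
            by_cases hxb : x = b
            · subst hxb; exact (Configuration.HasLines.mkLine_ax hab).2
            exfalso
            have hsub : ({x, a, b} : Set P) ⊆ TP := by
              intro y hy
              simp only [Set.mem_insert_iff, Set.mem_singleton_iff] at hy
              rcases hy with rfl | rfl | rfl
              exacts [hx, ha, hb]
            have h3 : ({x, a, b} : Set P).ncard = 3 := by
              rw [Set.ncard_insert_of_notMem (by simp [hxa, hxb]),
                  Set.ncard_insert_of_notMem (by simp [hab]),
                  Set.ncard_singleton]
            have := Set.ncard_le_ncard hsub (Set.toFinite _)
            omega
          · push_neg at hex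
            by_cases hone : ∃ a : P, a ∈ TP
            · obtain ⟨a, ha⟩ := hone
              obtain ⟨m1, m2, _, h1, _⟩ := hlines2 a
              refine ⟨m1, fun x hx => ?_⟩
              have hxa : x = a := hex x a hx ha
              subst hxa
              exact h1
            · push_neg at hone
              exact ⟨l₀, fun x hx => absurd hx (hone x)⟩
        obtain ⟨m, hm⟩ := hline
        obtain ⟨u, huS, hadj⟩ := hS (.inr m)
        obtain ⟨x, rfl, hx⟩ := sumGraph_adj_inr hadj
        exact hx (hm x huS)
      have hTL3 : 3 ≤ TL.ncard := by
        by_contra hcontra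
        push_neg at hcontra
        have hpoint : ∃ x : P, ∀ m ∈ TL, x ∈ m := by
          by_cases hex : ∃ a b : L, a ∈ TL ∧ b ∈ TL ∧ a ≠ b
          · obtain ⟨a, b, ha, hb, hab⟩ := hex
            refine ⟨Configuration.HasPoints.mkPoint hab, fun m hm => ?_⟩
            by_cases hma : m = a
            · subst hma; exact (Configuration.HasPoints.mkPoint_ax hab).1
            by_cases hmb : m = b
            · subst hmb; exact (Configuration.HasPoints.mkPoint_ax hab).2
            exfalso
            have hsub : ({m, a, b} : Set L) ⊆ TL := by
              intro y hy
              simp only [Set.mem_insert_iff, Set.mem_singleton_iff] at hy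
              rcases hy with rfl | rfl | rfl
              exacts [hm, ha, hb]
            have h3 : ({m, a, b} : Set L).ncard = 3 := by
              rw [Set.ncard_insert_of_notMem (by simp [hma, hmb]),
                  Set.ncard_insert_of_notMem (by simp [hab]),
                  Set.ncard_singleton]
            have := Set.ncard_le_ncard hsub (Set.toFinite _)
            omega
          · push_neg at hex
            by_cases hone : ∃ a : L, a ∈ TL
            · obtain ⟨a, ha⟩ := hone
              obtain ⟨x1, x2, _, h1, _⟩ := hpts2 a
              refine ⟨x1, fun m hm => ?_⟩
              have hma : m = a := hex m a hm ha
              subst hma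
              exact h1
            · push_neg at hone
              obtain ⟨x⟩ := hPne
              exact ⟨x, fun m hm => absurd hm (hone m)⟩
        obtain ⟨x, hx⟩ := hpoint
        obtain ⟨u, huS, hadj⟩ := hS (.inl x)
        obtain ⟨m, rfl, hm⟩ := sumGraph_adj_inl hadj
        exact hm (hx m huS)
      have hdecomp : S = (Sum.inl '' TP) ∪ (Sum.inr '' TL) := by
        ext v
        cases v with
        | inl x => simp [hTP]
        | inr m => simp [hTL]
      have hdisj : Disjoint (Sum.inl '' TP) (Sum.inr '' TL) := by
        rw [Set.disjoint_left]
        rintro v ⟨x, _, rfl⟩ ⟨m, _, hm⟩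
        simp at hm
      rw [hdecomp, Set.ncard_union_eq hdisj (Set.toFinite _) (Set.toFinite _),
          Set.ncard_image_of_injective _ Sum.inl_injective,
          Set.ncard_image_of_injective _ Sum.inr_injective]
      omega
    rw [totalDomNum]
    apply le_antisymm
    · exact Nat.sInf_le hmem6
    · apply le_csInf ⟨6, hmem6⟩
      rintro m ⟨S, hS, rfl⟩
      exact hlow S hS
  -- the Grundy total domination number is 6
  have hgr6 : grundyTotalDomNum (sumGraph P L) = 6 := by
    set LST : List (P ⊕ L) := [.inl p₁, .inl p₂, .inl p₃, .inr l₁, .inr l₂, .inr l₃]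
      with hLST
    have hleg : IsLegalSeq (sumGraph P L) LST := by
      rw [isLegalSeq_iff]
      constructor
      · simp [hLST, hp12, hp13, hp23, hl12, hl13, hl23]
      · intro i hi hpos
        rw [hLST] at hi
        simp only [List.length_cons, List.length_nil] at hi
        interval_cases i
        · refine ⟨.inr l₂, by simp [hLST, hp₂l₂], ?_⟩
          intro j hj hji
          interval_cases j
          · simp only [hLST, List.getElem_cons_zero, sumGraph_adj_inl_inr, not_not]
            exact hax2.1
        · refine ⟨.inr l₃, by simp [hLST, hp₃l₃], ?_⟩
          intro j hj hji
          interval_cases j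
          · simp only [hLST, List.getElem_cons_zero, sumGraph_adj_inl_inr, not_not]
            exact hax3.1
          · simp only [hLST, List.getElem_cons_succ, List.getElem_cons_zero,
              sumGraph_adj_inl_inr, not_not]
            exact hax3.2
        · refine ⟨.inl p₁, by simp [hLST, hp₁l₁], ?_⟩
          intro j hj hji
          interval_cases j <;> simp [hLST]
        · refine ⟨.inl p₂, by simp [hLST, hp₂l₂], ?_⟩
          intro j hj hji
          interval_cases j
          · simp [hLST]
          · simp [hLST]
          · simp [hLST]
          · simp only [hLST, List.getElem_cons_succ, List.getElem_cons_zero,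
              sumGraph_adj_inr_inl, not_not]
            exact hax1.1
        · refine ⟨.inl p₃, by simp [hLST, hp₃l₃], ?_⟩
          intro j hj hji
          interval_cases j
          · simp [hLST]
          · simp [hLST]
          · simp [hLST]
          · simp only [hLST, List.getElem_cons_succ, List.getElem_cons_zero,
              sumGraph_adj_inr_inl, not_not]
            exact hax1.2
          · simp only [hLST, List.getElem_cons_succ, List.getElem_cons_zero,
              sumGraph_adj_inr_inl, not_not]
            exact hax2.2
    have hdom : IsTotalDomSet (sumGraph P L) {v | v ∈ LST} := by
      intro v
      obtain ⟨u, hu, hadj⟩ := hcover v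
      refine ⟨u, ?_, hadj⟩
      rcases hu with rfl | rfl | rfl | rfl | rfl | rfl <;> simp [hLST]
    have hmem : (6 : ℕ) ∈
        {m : ℕ | ∃ l : List (P ⊕ L), IsTotalDomSeq (sumGraph P L) l ∧ l.length = m} :=
      ⟨LST, ⟨hleg, hdom⟩, by simp [hLST]⟩
    have hup : ∀ l : List (P ⊕ L), IsTotalDomSeq (sumGraph P L) l → l.length ≤ 6 := by
      intro l hl
      by_contra hcon
      push_neg at hcon
      set F : Finset (Fin l.length) :=
        Finset.univ.filter (fun i => ∃ p : P, l.get i = .inl p) with hF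
      set Fc : Finset (Fin l.length) :=
        Finset.univ.filter (fun i => ∃ m : L, l.get i = .inr m) with hFc
      have hdisj : Disjoint F Fc := by
        rw [Finset.disjoint_left]
        intro i hi hi'
        rw [hF, Finset.mem_filter] at hi
        rw [hFc, Finset.mem_filter] at hi'
        obtain ⟨p, hp⟩ := hi.2
        obtain ⟨m, hm⟩ := hi'.2
        rw [hp] at hm
        simp at hm
      have hunion : F ∪ Fc = Finset.univ := by
        ext i
        simp only [Finset.mem_union, Finset.mem_univ, iff_true, hF, hFc,
          Finset.mem_filter, true_and]
        cases hgi : l.get i with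
        | inl p => exact Or.inl ⟨p, rfl⟩
        | inr m => exact Or.inr ⟨m, rfl⟩
      have hcards : F.card + Fc.card = l.length := by
        rw [← card_union_of_disjoint hdisj, hunion, Finset.card_univ, Fintype.card_fin]
      have h4 : 4 ≤ F.card ∨ 4 ≤ Fc.card := by omega
      rcases h4 with h4 | h4
      · obtain ⟨i1, i2, i3, i4, m1, m2, m3, m4, h12, h23, h34⟩ := exists_four_ordered F h4
        rw [hF, Finset.mem_filter] at m1 m2 m3 m4
        obtain ⟨q1, e1⟩ := m1.2
        obtain ⟨q2, e2⟩ := m2.2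
        obtain ⟨q3, e3⟩ := m3.2
        obtain ⟨q4, e4⟩ := m4.2
        exact four_points_false heqq hl.1 h12 h23 h34 e1 e2 e3 e4
      · obtain ⟨i1, i2, i3, i4, m1, m2, m3, m4, h12, h23, h34⟩ := exists_four_ordered Fc h4
        rw [hFc, Finset.mem_filter] at m1 m2 m3 m4
        obtain ⟨q1, e1⟩ := m1.2
        obtain ⟨q2, e2⟩ := m2.2
        obtain ⟨q3, e3⟩ := m3.2
        obtain ⟨q4, e4⟩ := m4.2
        exact four_lines_false heqq hl.1 h12 h23 h34 e1 e2 e3 e4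
    rw [grundyTotalDomNum]
    apply le_antisymm
    · apply csSup_le ⟨6, hmem⟩
      rintro m ⟨l, hl, rfl⟩
      exact hup l hl
    · exact le_csSup (grundy_set_bddAbove _) hmem
  refine ⟨P ⊕ L, inferInstance, sumGraph P L, Set.range Sum.inl, Set.range Sum.inr,
    ?_, ?_, ?_, ?_, ?_, ?_⟩
  · -- cardinality
    rw [Fintype.card_sum, hcardP, hcardL]
    omega
  · -- bipartition
    constructor
    · rintro (p | l)
      · exact Or.inl ⟨⟨p, rfl⟩, by rintro ⟨x, hx⟩; simp at hx⟩
      · exact Or.inr ⟨⟨l, rfl⟩, by rintro ⟨x, hx⟩; simp at hx⟩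
    · rintro (p | l) (p' | l') h
      · exact absurd h sumGraph_adj_inl_inl
      · exact Or.inl ⟨⟨p, rfl⟩, ⟨l', rfl⟩⟩
      · exact Or.inr ⟨⟨l, rfl⟩, ⟨p', rfl⟩⟩
      · exact absurd h sumGraph_adj_inr_inr
  · -- false twin free
    intro u v huv heq
    cases u with
    | inl p =>
      cases v with
      | inl p' =>
        have hne : p ≠ p' := fun h => huv (by rw [h])
        obtain ⟨l, hl1, hl2⟩ := hsep p p' hne
        have h1 : (Sum.inr l : P ⊕ L) ∈ (sumGraph P L).neighborSet (.inl p') := by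
          simp [SimpleGraph.mem_neighborSet, hl2]
        have h2 : (Sum.inr l : P ⊕ L) ∉ (sumGraph P L).neighborSet (.inl p) := by
          simp [SimpleGraph.mem_neighborSet, hl1]
        rw [heq] at h2
        exact h2 h1
      | inr l' =>
        obtain ⟨m, hm⟩ := Configuration.Nondegenerate.exists_line (L := L) p
        have h1 : (Sum.inr m : P ⊕ L) ∈ (sumGraph P L).neighborSet (.inl p) := by
          simp [SimpleGraph.mem_neighborSet, hm]
        rw [heq] at h1
        exact sumGraph_adj_inr_inr h1
    | inr l =>
      cases v with
      | inl p' =>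
        obtain ⟨m, hm⟩ := Configuration.Nondegenerate.exists_line (L := L) p'
        have h1 : (Sum.inr m : P ⊕ L) ∈ (sumGraph P L).neighborSet (.inl p') := by
          simp [SimpleGraph.mem_neighborSet, hm]
        rw [← heq] at h1
        exact sumGraph_adj_inr_inr h1
      | inr l' =>
        have hne : l ≠ l' := fun h => huv (by rw [h])
        obtain ⟨a, ha1, ha2⟩ := hsepl l l' hne
        have h1 : (Sum.inl a : P ⊕ L) ∈ (sumGraph P L).neighborSet (.inr l') := by
          simp [SimpleGraph.mem_neighborSet, ha2]
        have h2 : (Sum.inl a : P ⊕ L) ∉ (sumGraph P L).neighborSet (.inr l) := by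
          simp [SimpleGraph.mem_neighborSet, ha1]
        rw [heq] at h2
        exact h2 h1
  · -- regularity
    rintro (p | l)
    · have himg : (sumGraph P L).neighborSet (.inl p) = Sum.inr '' {l : L | p ∉ l} := by
        ext x
        cases x with
        | inl p' => simp [SimpleGraph.mem_neighborSet]
        | inr m => simp [SimpleGraph.mem_neighborSet]
      rw [himg, Set.ncard_image_of_injective _ Sum.inr_injective]
      have hcompl : {l : L | p ∉ l} = {l : L | p ∈ l}ᶜ := by ext m; simp
      have h2 : ({l : L | p ∈ l}).ncard + ({l : L | p ∈ l})ᶜ.ncard = Nat.card L :=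
        Set.ncard_add_ncard_compl _ (Set.toFinite _) (Set.toFinite _)
      have h3 : ({l : L | p ∈ l}).ncard = q + 1 := by
        rw [← Nat.card_coe_set_eq]
        exact hlc p
      have h4 : Nat.card L = n := by
        rw [Nat.card_eq_fintype_card, hcardL]
      rw [hcompl]
      omega
    · have himg : (sumGraph P L).neighborSet (.inr l) = Sum.inl '' {p : P | p ∉ l} := by
        ext x
        cases x with
        | inl p' => simp [SimpleGraph.mem_neighborSet]
        | inr m => simp [SimpleGraph.mem_neighborSet]
      rw [himg, Set.ncard_image_of_injective _ Sum.inl_injective]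
      have hcompl : {p : P | p ∉ l} = {p : P | p ∈ l}ᶜ := by ext m; simp
      have h2 : ({p : P | p ∈ l}).ncard + ({p : P | p ∈ l})ᶜ.ncard = Nat.card P :=
        Set.ncard_add_ncard_compl _ (Set.toFinite _) (Set.toFinite _)
      have h3 : ({p : P | p ∈ l}).ncard = q + 1 := by
        rw [← Nat.card_coe_set_eq]
        exact hpc l
      have h4 : Nat.card P = n := by
        rw [Nat.card_eq_fintype_card, hcardP]
      rw [hcompl]
      omega
  · -- total domination number
    exact htd6
  · -- Grundy total domination number
    exact hgr6

end Backward2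
/-- For `k ≥ 3`, an `(n−k)`-regular bipartite false twin-free graph
on `2n` vertices with `γ_t = γ_gr^t = 6` exists iff `n = k² − k + 1` and there
exists a (finite) projective plane of order `k − 1`. -/
theorem regular_bipartite_six_iff_projective_plane (n k : ℕ) (hk : 3 ≤ k) :
    (∃ (V : Type) (_ : Fintype V) (G : SimpleGraph V) (A B : Set V),
        Fintype.card V = 2 * n ∧ IsBipartitionOf G A B ∧ FalseTwinFree G ∧
        (∀ v : V, (G.neighborSet v).ncard = n - k) ∧
        totalDomNum G = 6 ∧ grundyTotalDomNum G = 6) ↔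
      (n = k ^ 2 - k + 1 ∧
        ∃ (P L : Type) (m : Membership P L) (_ : Fintype P) (_ : Fintype L)
          (pp : @Configuration.ProjectivePlane P L m),
          @Configuration.ProjectivePlane.order P L m pp = k - 1) := by
  constructor
  · rintro ⟨V, hV, G, A, B, hcard, hbip, hftf, hreg, htd, hgr⟩
    exact @forward_dir V hV G A B n k hk hcard hbip hftf hreg htd hgr
  · rintro ⟨hn, P, L, m, hP, hL, pp, hord⟩
    exact @backward_dir n k hk hn P L m hP hL pp hord
end

section
/- Let k ∈ ℕ with k ≥ 2 and set n = k² − k + 1. If there exists an orthogonal array OA(k, k − 1), then there exists an (n−k)-regular bipartite graph G on 2n vertices with γ_t(G) = 6 and γ_gr^t(G) = 6. -/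
/-- An orthogonal array `OA(s, q)`: a `q² × s` array with entries from `Fin q`
such that within any two distinct columns, every ordered pair of symbols
occurs in exactly one row. -/
def IsOrthogonalArray {s q : ℕ} (A : Fin (q ^ 2) → Fin s → Fin q) : Prop :=
  ∀ j₁ j₂ : Fin s, j₁ ≠ j₂ → ∀ x y : Fin q, ∃! r : Fin (q ^ 2), A r j₁ = x ∧ A r j₂ = y

open Finset
section
variable {P L : Type} (I : P → L → Prop)

def planeAdj : P ⊕ L → P ⊕ L → Prop
  | .inl p, .inr l => ¬ I p l
  | .inr l, .inl p => ¬ I p l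
  | _, _ => False

def planeGraph : SimpleGraph (P ⊕ L) where
  Adj := planeAdj I
  symm := ⟨by rintro (p|l) (p'|l') h <;> simp_all [planeAdj]⟩
  loopless := ⟨by rintro (p|l) h <;> simp_all [planeAdj]⟩

@[simp] lemma planeGraph_adj_ll (p p' : P) : ¬ (planeGraph I).Adj (.inl p) (.inl p') := by
  simp [planeGraph, planeAdj]
@[simp] lemma planeGraph_adj_rr (l l' : L) : ¬ (planeGraph I).Adj (.inr l) (.inr l') := by
  simp [planeGraph, planeAdj]
@[simp] lemma planeGraph_adj_lr (p : P) (l : L) : (planeGraph I).Adj (.inl p) (.inr l) ↔ ¬ I p l := by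
  simp [planeGraph, planeAdj]
@[simp] lemma planeGraph_adj_rl (p : P) (l : L) : (planeGraph I).Adj (.inr l) (.inl p) ↔ ¬ I p l := by
  simp [planeGraph, planeAdj]


/-- helper: a legal step at a point index with two earlier point indices yields a line
through the two earlier points missing the current point. -/
lemma legal_step_left {l : List (P ⊕ L)} (hl : IsLegalSeq (planeGraph I) l)
    {j1 j2 i : Fin l.length} (h12 : (j1:ℕ) < j2) (h2i : (j2:ℕ) < i)
    {p1 p2 p : P} (e1 : l.get j1 = .inl p1) (e2 : l.get j2 = .inl p2) (e : l.get i = .inl p) :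
    ∃ m : L, I p1 m ∧ I p2 m ∧ ¬ I p m := by
  obtain ⟨w, hw, hprev⟩ := hl.2 i (by omega)
  rw [e] at hw
  obtain (p'|m) := w
  · exact absurd hw (planeGraph_adj_ll I _ _)
  · refine ⟨m, ?_, ?_, (planeGraph_adj_lr I p m).1 hw⟩
    · have := hprev j1 (by omega); rw [e1] at this; simpa using this
    · have := hprev j2 (by omega); rw [e2] at this; simpa using this

lemma legal_card_left {l : List (P ⊕ L)} (hl : IsLegalSeq (planeGraph I) l)
    (join : ∀ p q : P, p ≠ q → ∃! m : L, I p m ∧ I q m) :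
    (Finset.univ.filter (fun i : Fin l.length => (l.get i).isLeft)).card ≤ 3 := by
  by_contra hc
  push_neg at hc
  obtain ⟨s, hs, hcard⟩ := Finset.exists_subset_card_eq (show 4 ≤ _ from hc)
  have e := s.orderIsoOfFin hcard
  have mono : ∀ a b : Fin 4, a < b → ((e a : Fin l.length) : ℕ) < ((e b : Fin l.length) : ℕ) := by
    intro a b hab
    exact_mod_cast (e.lt_iff_lt.2 hab)
  have hleft : ∀ a : Fin 4, ∃ p : P, l.get (e a : Fin l.length) = .inl p := by
    intro a
    have h2 := hs (e a).2
    simp only [Finset.mem_filter] at h2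
    exact Sum.isLeft_iff.mp h2.2
  obtain ⟨p0, hp0⟩ := hleft 0
  obtain ⟨p1, hp1⟩ := hleft 1
  obtain ⟨p2, hp2⟩ := hleft 2
  obtain ⟨p3, hp3⟩ := hleft 3
  have hne : p0 ≠ p1 := by
    intro hpe
    have h3 : ((e (0:Fin 4) : Fin l.length)) = ((e (1:Fin 4) : Fin l.length)) := by
      apply List.nodup_iff_injective_get.mp hl.1
      rw [hp0, hp1, hpe]
    have h4 := mono 0 1 (by decide)
    rw [h3] at h4
    omega
  obtain ⟨m, hm0, hm1, hm2⟩ :=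
    legal_step_left I hl (mono 0 1 (by decide)) (mono 1 2 (by decide)) hp0 hp1 hp2
  have hpos : 0 < ((e (3:Fin 4) : Fin l.length) : ℕ) := by
    have := mono 0 3 (by decide); omega
  obtain ⟨w, hw, hprev⟩ := hl.2 (e (3:Fin 4) : Fin l.length) hpos
  rw [hp3] at hw
  obtain (p'|m') := w
  · exact absurd hw (planeGraph_adj_ll I _ _)
  · have hm'0 : I p0 m' := by
      have := hprev (e (0:Fin 4) : Fin l.length) (mono 0 3 (by decide))
      rw [hp0] at this; simpa using this
    have hm'1 : I p1 m' := by
      have := hprev (e (1:Fin 4) : Fin l.length) (mono 1 3 (by decide))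
      rw [hp1] at this; simpa using this
    have hm'2 : I p2 m' := by
      have := hprev (e (2:Fin 4) : Fin l.length) (mono 2 3 (by decide))
      rw [hp2] at this; simpa using this
    obtain ⟨mm, _, huniq⟩ := join p0 p1 hne
    have hmm : m = m' := by
      rw [huniq m ⟨hm0, hm1⟩, huniq m' ⟨hm'0, hm'1⟩]
    exact hm2 (hmm ▸ hm'2)
lemma legal_step_right {l : List (P ⊕ L)} (hl : IsLegalSeq (planeGraph I) l)
    {j1 j2 i : Fin l.length} (h12 : (j1:ℕ) < j2) (h2i : (j2:ℕ) < i)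
    {m1 m2 m : L} (e1 : l.get j1 = .inr m1) (e2 : l.get j2 = .inr m2) (e : l.get i = .inr m) :
    ∃ p : P, I p m1 ∧ I p m2 ∧ ¬ I p m := by
  obtain ⟨w, hw, hprev⟩ := hl.2 i (by omega)
  rw [e] at hw
  obtain (p|m') := w
  · refine ⟨p, ?_, ?_, (planeGraph_adj_rl I p m).1 hw⟩
    · have := hprev j1 (by omega); rw [e1] at this; simpa using this
    · have := hprev j2 (by omega); rw [e2] at this; simpa using this
  · exact absurd hw (planeGraph_adj_rr I _ _)

lemma legal_card_right {l : List (P ⊕ L)} (hl : IsLegalSeq (planeGraph I) l)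
    (meet : ∀ m m' : L, m ≠ m' → ∃! p : P, I p m ∧ I p m') :
    (Finset.univ.filter (fun i : Fin l.length => (l.get i).isRight)).card ≤ 3 := by
  by_contra hc
  push_neg at hc
  obtain ⟨s, hs, hcard⟩ := Finset.exists_subset_card_eq (show 4 ≤ _ from hc)
  have e := s.orderIsoOfFin hcard
  have mono : ∀ a b : Fin 4, a < b → ((e a : Fin l.length) : ℕ) < ((e b : Fin l.length) : ℕ) := by
    intro a b hab
    exact_mod_cast (e.lt_iff_lt.2 hab)
  have hright : ∀ a : Fin 4, ∃ m : L, l.get (e a : Fin l.length) = .inr m := by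
    intro a
    have h2 := hs (e a).2
    simp only [Finset.mem_filter] at h2
    exact Sum.isRight_iff.mp h2.2
  obtain ⟨m0, hp0⟩ := hright 0
  obtain ⟨m1, hp1⟩ := hright 1
  obtain ⟨m2, hp2⟩ := hright 2
  obtain ⟨m3, hp3⟩ := hright 3
  have hne : m0 ≠ m1 := by
    intro hpe
    have h3 : ((e (0:Fin 4) : Fin l.length)) = ((e (1:Fin 4) : Fin l.length)) := by
      apply List.nodup_iff_injective_get.mp hl.1
      rw [hp0, hp1, hpe]
    have h4 := mono 0 1 (by decide)
    rw [h3] at h4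
    omega
  obtain ⟨p, hm0, hm1, hm2⟩ :=
    legal_step_right I hl (mono 0 1 (by decide)) (mono 1 2 (by decide)) hp0 hp1 hp2
  have hpos : 0 < ((e (3:Fin 4) : Fin l.length) : ℕ) := by
    have := mono 0 3 (by decide); omega
  obtain ⟨w, hw, hprev⟩ := hl.2 (e (3:Fin 4) : Fin l.length) hpos
  rw [hp3] at hw
  obtain (p'|m') := w
  · have hm'0 : I p' m0 := by
      have := hprev (e (0:Fin 4) : Fin l.length) (mono 0 3 (by decide))
      rw [hp0] at this; simpa using this
    have hm'1 : I p' m1 := by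
      have := hprev (e (1:Fin 4) : Fin l.length) (mono 1 3 (by decide))
      rw [hp1] at this; simpa using this
    have hm'2 : I p' m2 := by
      have := hprev (e (2:Fin 4) : Fin l.length) (mono 2 3 (by decide))
      rw [hp2] at this; simpa using this
    obtain ⟨pp, _, huniq⟩ := meet m0 m1 hne
    have hmm : p = p' := by
      rw [huniq p ⟨hm0, hm1⟩, huniq p' ⟨hm'0, hm'1⟩]
    exact hm2 (hmm ▸ hm'2)
  · exact absurd hw (planeGraph_adj_rr I _ _)

lemma legal_length_le_six {l : List (P ⊕ L)} (hl : IsLegalSeq (planeGraph I) l)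
    (join : ∀ p q : P, p ≠ q → ∃! m : L, I p m ∧ I q m)
    (meet : ∀ m m' : L, m ≠ m' → ∃! p : P, I p m ∧ I p m') :
    l.length ≤ 6 := by
  have h1 := legal_card_left I hl join
  have h2 := legal_card_right I hl meet
  have h3 := Finset.card_filter_add_card_filter_not
    (s := (Finset.univ : Finset (Fin l.length)))
    (p := fun i => (l.get i).isLeft)
  have h4 : (Finset.univ.filter (fun i : Fin l.length => ¬ (l.get i).isLeft)) =
      (Finset.univ.filter (fun i : Fin l.length => (l.get i).isRight)) := by
    apply Finset.filter_congr
    intro i _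
    simp [Sum.not_isLeft]
  rw [h4] at h3
  have h5 : (Finset.univ : Finset (Fin l.length)).card = l.length := by simp
  omega
end






section Master
variable {P L : Type} [Fintype P] [Fintype L] [DecidableEq P] [DecidableEq L]

theorem master (I : P → L → Prop) (n k : ℕ) (hk : 2 ≤ k)
    (cardP : Fintype.card P = n) (cardL : Fintype.card L = n)
    (pdeg : ∀ p, {m : L | I p m}.ncard = k)
    (ldeg : ∀ l, {p : P | I p l}.ncard = k)
    (join : ∀ p q : P, p ≠ q → ∃! m : L, I p m ∧ I q m)
    (meet : ∀ m m' : L, m ≠ m' → ∃! p : P, I p m ∧ I p m')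
    (a b c : P) (lab lac lbc : L)
    (hIa1 : I a lab) (hIb1 : I b lab) (hIc1 : ¬ I c lab)
    (hIa2 : I a lac) (hIb2 : ¬ I b lac) (hIc2 : I c lac)
    (hIa3 : ¬ I a lbc) (hIb3 : I b lbc) (hIc3 : I c lbc) :
    ∃ (V : Type) (_ : Fintype V) (G : SimpleGraph V) (A B : Set V),
      Fintype.card V = 2 * n ∧ IsBipartitionOf G A B ∧
      (∀ v : V, (G.neighborSet v).ncard = n - k) ∧
      totalDomNum G = 6 ∧ grundyTotalDomNum G = 6 := by
  classical
  -- distinctness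
  have hab : a ≠ b := fun h => hIb2 (h ▸ hIa2)
  have hac : a ≠ c := fun h => hIc1 (h ▸ hIa1)
  have hbc : b ≠ c := fun h => hIc1 (h ▸ hIb1)
  have hl12 : lab ≠ lac := fun h => hIb2 (h ▸ hIb1)
  have hl13 : lab ≠ lbc := fun h => hIa3 (h ▸ hIa1)
  have hl23 : lac ≠ lbc := fun h => hIa3 (h ▸ hIa2)
  set G := planeGraph I with hG
  -- the 6-element total dominating set
  set S6 : Set (P ⊕ L) :=
    {Sum.inl a, Sum.inl b, Sum.inl c, Sum.inr lab, Sum.inr lac, Sum.inr lbc} with hS6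
  have htd : IsTotalDomSet G S6 := by
    rintro (p|m)
    · by_cases h1 : I p lab
      · by_cases h2 : I p lac
        · have hpa : p = a := by
            obtain ⟨x, _, huniq⟩ := meet lab lac hl12
            rw [huniq p ⟨h1, h2⟩, huniq a ⟨hIa1, hIa2⟩]
          refine ⟨Sum.inr lbc, by simp [S6], ?_⟩
          rw [hpa]
          simpa [hG] using hIa3
        · exact ⟨Sum.inr lac, by simp [S6], by simpa [hG] using h2⟩
      · exact ⟨Sum.inr lab, by simp [S6], by simpa [hG] using h1⟩
    · by_cases h1 : I a m
      · by_cases h2 : I b m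
        · have hm : m = lab := by
            obtain ⟨x, _, huniq⟩ := join a b hab
            rw [huniq m ⟨h1, h2⟩, huniq lab ⟨hIa1, hIb1⟩]
          refine ⟨Sum.inl c, by simp [S6], ?_⟩
          rw [hm]
          simpa [hG] using hIc1
        · exact ⟨Sum.inl b, by simp [S6], by simpa [hG] using h2⟩
      · exact ⟨Sum.inl a, by simp [S6], by simpa [hG] using h1⟩
  have hS6card : S6.ncard = 6 := by
    have hfs : S6 =
        ↑({Sum.inl a, Sum.inl b, Sum.inl c, Sum.inr lab, Sum.inr lac, Sum.inr lbc} :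
          Finset (P ⊕ L)) := by
      simp [hS6]
    rw [hfs, Set.ncard_coe_finset]
    rw [Finset.card_insert_of_notMem (by simp [hab, hac]),
        Finset.card_insert_of_notMem (by simp [hbc]),
        Finset.card_insert_of_notMem (by simp),
        Finset.card_insert_of_notMem (by simp [hl12, hl13]),
        Finset.card_insert_of_notMem (by simp [hl23]),
        Finset.card_singleton]
  -- the total dominating sequence of length 6
  set seq : List (P ⊕ L) :=
    [Sum.inl a, Sum.inl b, Sum.inl c, Sum.inr lbc, Sum.inr lac, Sum.inr lab] with hseq
  have hseqset : {v : P ⊕ L | v ∈ seq} = S6 := by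
    ext v
    simp only [hseq, hS6, Set.mem_setOf_eq, List.mem_cons, List.not_mem_nil, or_false,
      Set.mem_insert_iff, Set.mem_singleton_iff]
    tauto
  have hnodup : seq.Nodup := by
    simp only [hseq, List.nodup_cons, List.mem_cons, List.not_mem_nil, List.nodup_nil]
    refine ⟨?_, ?_, ?_, ?_, ?_, ?_⟩ <;>
      simp [hab, hac, hbc, hl12, hl13, hl23, hl12.symm, hl13.symm, hl23.symm,
        (Ne.symm hl23), (Ne.symm hl13), (Ne.symm hl12)]
  have hlegal : IsLegalSeq G seq := by
    refine ⟨hnodup, ?_⟩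
    intro i hi
    fin_cases i
    · simp at hi
    · refine ⟨Sum.inr lac, by simpa [hseq, hG] using hIb2, ?_⟩
      intro j hj
      fin_cases j
      · simpa [hseq, hG] using hIa2
      all_goals (exfalso; simp at hj)
    · refine ⟨Sum.inr lab, by simpa [hseq, hG] using hIc1, ?_⟩
      intro j hj
      fin_cases j
      · simpa [hseq, hG] using hIa1
      · simpa [hseq, hG] using hIb1
      all_goals (exfalso; simp at hj)
    · refine ⟨Sum.inl a, by simpa [hseq, hG] using hIa3, ?_⟩
      intro j hj
      fin_cases j
      · simp [hseq, hG]
      · simp [hseq, hG]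
      · simp [hseq, hG]
      all_goals (exfalso; simp at hj)
    · refine ⟨Sum.inl b, by simpa [hseq, hG] using hIb2, ?_⟩
      intro j hj
      fin_cases j
      · simp [hseq, hG]
      · simp [hseq, hG]
      · simp [hseq, hG]
      · simpa [hseq, hG] using hIb3
      all_goals (exfalso; simp at hj)
    · refine ⟨Sum.inl c, by simpa [hseq, hG] using hIc1, ?_⟩
      intro j hj
      fin_cases j
      · simp [hseq, hG]
      · simp [hseq, hG]
      · simp [hseq, hG]
      · simpa [hseq, hG] using hIc3
      · simpa [hseq, hG] using hIc2
      · exfalso; simp at hj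
  have hseqtd : IsTotalDomSeq G seq := ⟨hlegal, hseqset ▸ htd⟩
  have hub : ∀ x ∈ {k : ℕ | ∃ l : List (P ⊕ L), IsTotalDomSeq G l ∧ l.length = k}, x ≤ 6 := by
    rintro x ⟨l, ⟨hleg, _⟩, rfl⟩
    rw [hG] at hleg
    exact legal_length_le_six I hleg join meet
  have hlb : ∀ S : Set (P ⊕ L), IsTotalDomSet G S → 6 ≤ S.ncard := by
    intro S hS
    set PS : Set P := {p | Sum.inl p ∈ S} with hPS
    set LS : Set L := {m | Sum.inr m ∈ S} with hLS
    have hSeq2 : S = Sum.inl '' PS ∪ Sum.inr '' LS := by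
      ext (p|m) <;> simp [hPS, hLS]
    have hP3 : 3 ≤ PS.ncard := by
      by_contra hcon
      push_neg at hcon
      have hexline : ∃ l0, ∀ p ∈ PS, I p l0 := by
        rcases PS.eq_empty_or_nonempty with he | ⟨p, hp⟩
        · exact ⟨lab, by simp [he]⟩
        · by_cases hq : ∃ q ∈ PS, q ≠ p
          · obtain ⟨q, hqPS, hqp⟩ := hq
            obtain ⟨l0, ⟨hpl0, hql0⟩, _⟩ := join p q (Ne.symm hqp)
            refine ⟨l0, fun r hr => ?_⟩
            by_cases hrp : r = p
            · exact hrp ▸ hpl0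
            by_cases hrq : r = q
            · exact hrq ▸ hql0
            exfalso
            have hpr : p ≠ r := fun h => hrp h.symm
            have hqr : q ≠ r := fun h => hrq h.symm
            have hsub : {p, q, r} ⊆ PS := by
              simp [Set.insert_subset_iff, hp, hqPS, hr]
            have h3 : ({p, q, r} : Set P).ncard = 3 := by
              rw [Set.ncard_insert_of_notMem
                    (by simp [Ne.symm hqp, hpr]) (Set.toFinite _),
                  Set.ncard_pair hqr]
            have := Set.ncard_le_ncard hsub (Set.toFinite PS)
            omega
          · push_neg at hq
            have hne : {m : L | I p m}.Nonempty := by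
              apply Set.nonempty_of_ncard_ne_zero
              rw [pdeg p]; omega
            obtain ⟨l0, hl0⟩ := hne
            exact ⟨l0, fun r hr => (hq r hr) ▸ hl0⟩
      obtain ⟨l0, hl0⟩ := hexline
      obtain ⟨u, huS, hadj⟩ := hS (Sum.inr l0)
      rw [hG] at hadj
      obtain (p'|m') := u
      · have hmem : p' ∈ PS := huS
        exact ((planeGraph_adj_rl I p' l0).1 hadj) (hl0 p' hmem)
      · exact absurd hadj (planeGraph_adj_rr I _ _)
    have hL3 : 3 ≤ LS.ncard := by
      by_contra hcon
      push_neg at hcon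
      have hexpt : ∃ p0, ∀ m ∈ LS, I p0 m := by
        rcases LS.eq_empty_or_nonempty with he | ⟨m, hm⟩
        · exact ⟨a, by simp [he]⟩
        · by_cases hq : ∃ m' ∈ LS, m' ≠ m
          · obtain ⟨m', hm'LS, hm'm⟩ := hq
            obtain ⟨p0, ⟨hp0m, hp0m'⟩, _⟩ := meet m m' (Ne.symm hm'm)
            refine ⟨p0, fun r hr => ?_⟩
            by_cases hrp : r = m
            · exact hrp ▸ hp0m
            by_cases hrq : r = m'
            · exact hrq ▸ hp0m'
            exfalso
            have hpr : m ≠ r := fun h => hrp h.symm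
            have hqr : m' ≠ r := fun h => hrq h.symm
            have hsub : {m, m', r} ⊆ LS := by
              simp [Set.insert_subset_iff, hm, hm'LS, hr]
            have h3 : ({m, m', r} : Set L).ncard = 3 := by
              rw [Set.ncard_insert_of_notMem
                    (by simp [Ne.symm hm'm, hpr]) (Set.toFinite _),
                  Set.ncard_pair hqr]
            have := Set.ncard_le_ncard hsub (Set.toFinite LS)
            omega
          · push_neg at hq
            have hne : {p : P | I p m}.Nonempty := by
              apply Set.nonempty_of_ncard_ne_zero
              rw [ldeg m]; omega
            obtain ⟨p0, hp0⟩ := hne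
            exact ⟨p0, fun r hr => (hq r hr) ▸ hp0⟩
      obtain ⟨p0, hp0⟩ := hexpt
      obtain ⟨u, huS, hadj⟩ := hS (Sum.inl p0)
      rw [hG] at hadj
      obtain (p'|m') := u
      · exact absurd hadj (planeGraph_adj_ll I _ _)
      · have hmem : m' ∈ LS := huS
        exact ((planeGraph_adj_lr I p0 m').1 hadj) (hp0 m' hmem)
    have hdisj : Disjoint (Sum.inl '' PS : Set (P ⊕ L)) (Sum.inr '' LS) := by
      rw [Set.disjoint_left]
      rintro x ⟨p, _, rfl⟩ ⟨m, _, hx⟩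
      exact Sum.inl_ne_inr hx.symm
    rw [hSeq2, Set.ncard_union_eq hdisj (Set.toFinite _) (Set.toFinite _),
        Set.ncard_image_of_injective _ Sum.inl_injective,
        Set.ncard_image_of_injective _ Sum.inr_injective]
    omega
  refine ⟨P ⊕ L, inferInstance, G, Set.range Sum.inl, Set.range Sum.inr, ?_, ?_, ?_, ?_, ?_⟩
  · simp [cardP, cardL]; ring
  · constructor
    · rintro (p|m)
      · exact Or.inl ⟨⟨p, rfl⟩, by rintro ⟨m, hm⟩; exact absurd hm (by simp)⟩
      · exact Or.inr ⟨⟨m, rfl⟩, by rintro ⟨p, hp⟩; exact absurd hp (by simp)⟩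
    · rintro (p|m) (p'|m') hadj
      · rw [hG] at hadj; exact absurd hadj (planeGraph_adj_ll I _ _)
      · exact Or.inl ⟨⟨p, rfl⟩, ⟨m', rfl⟩⟩
      · exact Or.inr ⟨⟨m, rfl⟩, ⟨p', rfl⟩⟩
      · rw [hG] at hadj; exact absurd hadj (planeGraph_adj_rr I _ _)
  · -- regularity
    rintro (p|m)
    · have h1 : G.neighborSet (Sum.inl p) = Sum.inr '' {m : L | ¬ I p m} := by
        ext (p'|m') <;> simp [hG, SimpleGraph.neighborSet]
      rw [h1, Set.ncard_image_of_injective _ Sum.inr_injective]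
      have h2 : {m : L | ¬ I p m} = {m : L | I p m}ᶜ := by ext m; simp
      have h3 := Set.ncard_add_ncard_compl {m : L | I p m}
      rw [Nat.card_eq_fintype_card, cardL] at h3
      rw [h2]
      have h5 := pdeg p
      omega
    · have h1 : G.neighborSet (Sum.inr m) = Sum.inl '' {p : P | ¬ I p m} := by
        ext (p'|m') <;> simp [hG, SimpleGraph.neighborSet]
      rw [h1, Set.ncard_image_of_injective _ Sum.inl_injective]
      have h2 : {p : P | ¬ I p m} = {p : P | I p m}ᶜ := by ext p; simp
      have h3 := Set.ncard_add_ncard_compl {p : P | I p m}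
      rw [Nat.card_eq_fintype_card, cardP] at h3
      rw [h2]
      have h5 := ldeg m
      omega
  · -- total domination number
    have hmem' : 6 ∈ {k : ℕ | ∃ S : Set (P ⊕ L), IsTotalDomSet G S ∧ S.ncard = 6} :=
      ⟨S6, htd, hS6card⟩
    have hmem'' : 6 ∈ {k : ℕ | ∃ S : Set (P ⊕ L), IsTotalDomSet G S ∧ S.ncard = k} :=
      ⟨S6, htd, hS6card⟩
    refine le_antisymm (Nat.sInf_le hmem'') (le_csInf ⟨6, hmem''⟩ ?_)
    rintro x ⟨S, hS, rfl⟩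
    exact hlb S hS
  · -- Grundy total domination number
    have hmem : 6 ∈ {k : ℕ | ∃ l : List (P ⊕ L), IsTotalDomSeq G l ∧ l.length = k} :=
      ⟨seq, hseqtd, rfl⟩
    exact le_antisymm (csSup_le ⟨6, hmem⟩ hub) (le_csSup ⟨6, fun x hx => hub x hx⟩ hmem)
end Master



section Construction
variable {k : ℕ}

/-- incidence between points and lines of the projective plane built from an OA -/
def oaInc (A : Fin ((k-1)^2) → Fin k → Fin (k-1)) :
    (Fin ((k-1)^2) ⊕ Fin k) → ((Fin k × Fin (k-1)) ⊕ Unit) → Prop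
  | .inl r, .inl jx => A r jx.1 = jx.2
  | .inl _, .inr _ => False
  | .inr j, .inl jx => j = jx.1
  | .inr _, .inr _ => True

variable (hk : 2 ≤ k) (A : Fin ((k-1)^2) → Fin k → Fin (k-1)) (hA : IsOrthogonalArray A)

include hk in
/-- some other column -/
lemma oa_other_col (j : Fin k) : ∃ j' : Fin k, j' ≠ j :=
  Fintype.exists_ne_of_one_lt_card (by simp; omega) j

include hk hA in
lemma oa_class_card (j : Fin k) (x : Fin (k-1)) :
    (Finset.univ.filter (fun r => A r j = x)).card = k - 1 := by
  obtain ⟨j', hj'⟩ := oa_other_col hk j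
  have := Finset.card_bij (s := Finset.univ.filter (fun r => A r j = x))
    (t := (Finset.univ : Finset (Fin (k-1)))) (fun r _ => A r j')
    (fun r hr => Finset.mem_univ _)
    (by
      intro r1 h1 r2 h2 he
      simp only [Finset.mem_filter] at h1 h2
      obtain ⟨w, _, huniq⟩ := hA j j' (Ne.symm hj') x (A r1 j')
      rw [huniq r1 ⟨h1.2, rfl⟩, huniq r2 ⟨h2.2, he.symm⟩])
    (by
      intro y _
      obtain ⟨r, ⟨h1, h2⟩, _⟩ := hA j j' (Ne.symm hj') x y
      exact ⟨r, Finset.mem_filter.mpr ⟨Finset.mem_univ _, h1⟩, h2⟩)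
  rw [this, Finset.card_univ, Fintype.card_fin]

include hA in
lemma oa_agree_unique {r r' : Fin ((k-1)^2)} {j1 j2 : Fin k} (hj : j1 ≠ j2)
    (h1 : A r j1 = A r' j1) (h2 : A r j2 = A r' j2) : r = r' := by
  obtain ⟨w, _, huniq⟩ := hA j1 j2 hj (A r j1) (A r j2)
  rw [huniq r ⟨rfl, rfl⟩, huniq r' ⟨h1.symm, h2.symm⟩]

include hk hA in
lemma oa_exists_agree {r r' : Fin ((k-1)^2)} (hne : r ≠ r') : ∃ j, A r j = A r' j := by
  classical
  set S : Fin k → Finset (Fin ((k-1)^2)) :=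
    fun j => Finset.univ.filter (fun s => A s j = A r j ∧ s ≠ r) with hS
  have hScard : ∀ j, (S j).card = (k-1) - 1 := by
    intro j
    have he : S j = (Finset.univ.filter (fun s => A s j = A r j)).erase r := by
      ext s
      simp only [hS, Finset.mem_filter, Finset.mem_erase, Finset.mem_univ, true_and]
      tauto
    rw [he, Finset.card_erase_of_mem (by simp), oa_class_card hk A hA]
  have hdisj : ∀ j1 ∈ (Finset.univ : Finset (Fin k)), ∀ j2 ∈ Finset.univ, j1 ≠ j2 →
      Disjoint (S j1) (S j2) := by
    intro j1 _ j2 _ hj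
    rw [Finset.disjoint_left]
    intro s h1 h2
    simp only [hS, Finset.mem_filter] at h1 h2
    exact h1.2.2 (oa_agree_unique A hA hj h1.2.1 h2.2.1)
  have hT : (Finset.univ.biUnion S).card = k * ((k-1) - 1) := by
    rw [Finset.card_biUnion hdisj]
    simp [hScard, Finset.sum_const]
  have hsub : Finset.univ.biUnion S ⊆ Finset.univ.erase r := by
    intro s hs
    simp only [Finset.mem_biUnion, hS, Finset.mem_filter] at hs
    obtain ⟨j, _, _, he, hne2⟩ := hs
    exact Finset.mem_erase.mpr ⟨hne2, Finset.mem_univ _⟩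
  have hcards : (Finset.univ.erase r).card = (k-1)^2 - 1 := by
    rw [Finset.card_erase_of_mem (Finset.mem_univ _), Finset.card_univ, Fintype.card_fin]
  have heq : Finset.univ.biUnion S = Finset.univ.erase r := by
    apply Finset.eq_of_subset_of_card_le hsub
    rw [hcards, hT]
    obtain ⟨m, hm⟩ : ∃ m, k = m + 2 := ⟨k - 2, by omega⟩
    subst hm
    simp only [show m+2-1 = m+1 from rfl, show m+1-1 = m from rfl]
    have e1 : (m+1)^2 = m*m+2*m+1 := by ring
    have e2 : (m+2)*m = m*m+2*m := by ring
    omega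
  have : r' ∈ Finset.univ.biUnion S := by
    rw [heq]
    exact Finset.mem_erase.mpr ⟨Ne.symm hne, Finset.mem_univ _⟩
  simp only [Finset.mem_biUnion, hS, Finset.mem_filter] at this
  obtain ⟨j, _, _, he, _⟩ := this
  exact ⟨j, he.symm⟩


include hk in
lemma oa_pdeg (p : Fin ((k-1)^2) ⊕ Fin k) :
    {m : (Fin k × Fin (k-1)) ⊕ Unit | oaInc A p m}.ncard = k := by
  obtain (r | j) := p
  · have he : {m : (Fin k × Fin (k-1)) ⊕ Unit | oaInc A (.inl r) m} =
        (fun j : Fin k => (Sum.inl (j, A r j) : (Fin k × Fin (k-1)) ⊕ Unit)) '' Set.univ := by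
      ext (⟨j, x⟩ | u)
      · simp only [Set.image_univ, Set.mem_range, Set.mem_setOf_eq, oaInc, Sum.inl.injEq,
          Prod.mk.injEq]
        constructor
        · intro h; exact ⟨j, rfl, h⟩
        · rintro ⟨j', rfl, h⟩; exact h
      · simp [oaInc]
    rw [he, Set.ncard_image_of_injective _ (fun j1 j2 h => by
      injection h with h'
      exact (Prod.ext_iff.mp h').1)]
    rw [Set.ncard_univ, Nat.card_eq_fintype_card, Fintype.card_fin]
  · have he : {m : (Fin k × Fin (k-1)) ⊕ Unit | oaInc A (.inr j) m} =
        (fun x : Fin (k-1) => (Sum.inl (j, x) : (Fin k × Fin (k-1)) ⊕ Unit)) '' Set.univ ∪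
          {Sum.inr ()} := by
      ext (⟨j', x⟩ | u)
      · simp only [Set.mem_setOf_eq, oaInc, Set.mem_union, Set.image_univ, Set.mem_range,
          Sum.inl.injEq, Prod.mk.injEq, Set.mem_singleton_iff]
        constructor
        · rintro rfl; exact Or.inl ⟨x, rfl, rfl⟩
        · rintro (⟨x', h1, h2⟩ | h)
          · exact h1
          · exact absurd h (by simp)
      · simp [oaInc]
    rw [he, Set.ncard_union_eq ?disj (Set.toFinite _) (Set.toFinite _)]
    case disj =>
      rw [Set.disjoint_left]
      rintro z ⟨x, _, rfl⟩ hz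
      simp at hz
    rw [Set.ncard_image_of_injective _ (fun x1 x2 h => by
      injection h with h'
      exact (Prod.ext_iff.mp h').2)]
    rw [Set.ncard_univ, Nat.card_eq_fintype_card, Fintype.card_fin, Set.ncard_singleton]
    omega

include hk hA in
lemma oa_ldeg (l : (Fin k × Fin (k-1)) ⊕ Unit) :
    {p : Fin ((k-1)^2) ⊕ Fin k | oaInc A p l}.ncard = k := by
  obtain (⟨j, x⟩ | u) := l
  · have he : {p : Fin ((k-1)^2) ⊕ Fin k | oaInc A p (.inl (j, x))} =
        Sum.inl '' {r | A r j = x} ∪ {Sum.inr j} := by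
      ext (r | j')
      · simp [oaInc]
      · simp only [Set.mem_setOf_eq, oaInc, Set.mem_union, Set.mem_image, Set.mem_setOf_eq,
          Set.mem_singleton_iff, Sum.inr.injEq]
        constructor
        · rintro rfl; exact Or.inr rfl
        · rintro (⟨r, _, h⟩ | rfl)
          · exact absurd h (by simp)
          · rfl
    rw [he, Set.ncard_union_eq ?disj (Set.toFinite _) (Set.toFinite _)]
    case disj =>
      rw [Set.disjoint_left]
      rintro z ⟨r, _, rfl⟩ hz
      simp at hz
    rw [Set.ncard_image_of_injective _ Sum.inl_injective, Set.ncard_singleton]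
    have hset : {r | A r j = x} = ↑(Finset.univ.filter (fun r => A r j = x)) := by
      ext r; simp
    rw [hset, Set.ncard_coe_finset, oa_class_card hk A hA]
    omega
  · have he : {p : Fin ((k-1)^2) ⊕ Fin k | oaInc A p (.inr u)} =
        Sum.inr '' Set.univ := by
      ext (r | j) <;> simp [oaInc]
    rw [he, Set.ncard_image_of_injective _ Sum.inr_injective, Set.ncard_univ,
      Nat.card_eq_fintype_card, Fintype.card_fin]

include hk hA in
lemma oa_join : ∀ p q : Fin ((k-1)^2) ⊕ Fin k, p ≠ q →
    ∃! m : (Fin k × Fin (k-1)) ⊕ Unit, oaInc A p m ∧ oaInc A q m := by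
  rintro (r | j) (r' | j') hne
  · have hrr : r ≠ r' := fun h => hne (by rw [h])
    obtain ⟨j0, hj0⟩ := oa_exists_agree hk A hA hrr
    refine ⟨.inl (j0, A r j0), ⟨rfl, hj0.symm⟩, ?_⟩
    rintro (⟨j2, x2⟩ | u) ⟨h1, h2⟩
    · simp only [oaInc] at h1 h2
      have hj2 : j2 = j0 := by
        by_contra hj2
        exact hrr (oa_agree_unique A hA hj2 (h1.trans h2.symm) hj0)
      subst hj2
      rw [← h1]
    · simp [oaInc] at h1
  · refine ⟨.inl (j', A r j'), ⟨rfl, rfl⟩, ?_⟩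
    rintro (⟨j2, x2⟩ | u) ⟨h1, h2⟩
    · simp only [oaInc] at h1 h2
      subst h2
      rw [← h1]
    · simp [oaInc] at h1
  · refine ⟨.inl (j, A r' j), ⟨rfl, rfl⟩, ?_⟩
    rintro (⟨j2, x2⟩ | u) ⟨h1, h2⟩
    · simp only [oaInc] at h1 h2
      subst h1
      rw [← h2]
    · simp [oaInc] at h2
  · have hjj : j ≠ j' := fun h => hne (by rw [h])
    refine ⟨.inr (), ⟨trivial, trivial⟩, ?_⟩
    rintro (⟨j2, x2⟩ | u) ⟨h1, h2⟩
    · simp only [oaInc] at h1 h2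
      exact absurd (h1.trans h2.symm) hjj
    · exact congrArg Sum.inr (Subsingleton.elim u ())

include hA in
lemma oa_meet : ∀ m m' : (Fin k × Fin (k-1)) ⊕ Unit, m ≠ m' →
    ∃! p : Fin ((k-1)^2) ⊕ Fin k, oaInc A p m ∧ oaInc A p m' := by
  rintro (⟨j, x⟩ | u) (⟨j', y⟩ | u') hne
  · by_cases hj : j = j'
    · subst hj
      have hxy : x ≠ y := fun h => hne (by rw [h])
      refine ⟨.inr j, ⟨rfl, rfl⟩, ?_⟩
      rintro (r | i) ⟨h1, h2⟩
      · simp only [oaInc] at h1 h2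
        exact absurd (h1.symm.trans h2) hxy
      · simp only [oaInc] at h1
        rw [h1]
    · obtain ⟨r0, ⟨h1, h2⟩, huniq⟩ := hA j j' hj x y
      refine ⟨.inl r0, ⟨h1, h2⟩, ?_⟩
      rintro (r | i) ⟨g1, g2⟩
      · simp only [oaInc] at g1 g2
        rw [huniq r ⟨g1, g2⟩]
      · simp only [oaInc] at g1 g2
        exact absurd (g1.symm.trans g2) hj
  · refine ⟨.inr j, ⟨rfl, trivial⟩, ?_⟩
    rintro (r | i) ⟨h1, h2⟩
    · simp [oaInc] at h2
    · simp only [oaInc] at h1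
      rw [h1]
  · refine ⟨.inr j', ⟨trivial, rfl⟩, ?_⟩
    rintro (r | i) ⟨h1, h2⟩
    · simp [oaInc] at h1
    · simp only [oaInc] at h2
      rw [h2]
  · exact absurd (congrArg Sum.inr (Subsingleton.elim u u')) hne

include hk in
lemma oa_cardP (n : ℕ) (hn : n = k^2 - k + 1) :
    Fintype.card (Fin ((k-1)^2) ⊕ Fin k) = n := by
  rw [Fintype.card_sum, Fintype.card_fin, Fintype.card_fin]
  obtain ⟨m, hm⟩ : ∃ m, k = m + 2 := ⟨k - 2, by omega⟩
  subst hm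
  simp only [show m+2-1 = m+1 from rfl] at *
  have e1 : (m+2)^2 = m*m+4*m+4 := by ring
  have e2 : (m+1)^2 = m*m+2*m+1 := by ring
  omega

include hk in
lemma oa_cardL (n : ℕ) (hn : n = k^2 - k + 1) :
    Fintype.card ((Fin k × Fin (k-1)) ⊕ Unit) = n := by
  rw [Fintype.card_sum, Fintype.card_prod, Fintype.card_fin, Fintype.card_fin,
    Fintype.card_unit]
  obtain ⟨m, hm⟩ : ∃ m, k = m + 2 := ⟨k - 2, by omega⟩
  subst hm
  simp only [show m+2-1 = m+1 from rfl] at *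
  have e1 : (m+2)^2 = m*m+4*m+4 := by ring
  have e2 : (m+2)*(m+1) = m*m+3*m+2 := by ring
  omega
end Construction

/-- For `k ≥ 2` and `n = k² − k + 1`, if an orthogonal array
`OA(k, k − 1)` exists, then there exists an `(n−k)`-regular bipartite graph on
`2n` vertices with `γ_t = γ_gr^t = 6`. -/
theorem regular_bipartite_six_of_orthogonal_array (k : ℕ) (hk : 2 ≤ k)
    (n : ℕ) (hn : n = k ^ 2 - k + 1)
    (h : ∃ A : Fin ((k - 1) ^ 2) → Fin k → Fin (k - 1), IsOrthogonalArray A) :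
    ∃ (V : Type) (_ : Fintype V) (G : SimpleGraph V) (A B : Set V),
      Fintype.card V = 2 * n ∧ IsBipartitionOf G A B ∧
      (∀ v : V, (G.neighborSet v).ncard = n - k) ∧
      totalDomNum G = 6 ∧ grundyTotalDomNum G = 6 := by
  obtain ⟨A, hA⟩ := h
  have hr0 : 0 < (k-1)^2 := Nat.one_le_pow 2 (k-1) (by omega)
  exact master (oaInc A) n k hk (oa_cardP hk n hn) (oa_cardL hk n hn)
    (oa_pdeg hk A) (oa_ldeg hk A hA) (oa_join hk A hA) (oa_meet A hA)
    (Sum.inr ⟨0, by omega⟩) (Sum.inr ⟨1, by omega⟩) (Sum.inl ⟨0, hr0⟩)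
    (Sum.inr ()) (Sum.inl (⟨0, by omega⟩, A ⟨0, hr0⟩ ⟨0, by omega⟩))
    (Sum.inl (⟨1, by omega⟩, A ⟨0, hr0⟩ ⟨1, by omega⟩))
    trivial trivial (fun hc => hc)
    rfl (by simp [oaInc, Fin.ext_iff]) rfl
    (by simp [oaInc, Fin.ext_iff]) rfl rfl
end
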